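/- arXiv:2112.15297 — 5 statements merged into one kernel-verified Lean document; each statement's English description precedes it below -/
import Mathlib

section
/- Let G be a finite simple graph with no isolated vertices and let S ⊆ V(G) be an independent set of G. Then the S-suspension G^S of G satisfies ind-match(G^S) = ind-match(G). -/
namespace MatchingPaper

variable {V : Type*}

/-- `M` is a matching of `G` : a finite set of edges of `G` that are pairwise disjoint. -/
def IsMatching (G : SimpleGraph V) (M : Finset (Sym2 V)) : Prop :=
  (↑M : Set (Sym2 V)) ⊆ G.edgeSet ∧
    ∀ e ∈ M, ∀ f ∈ M, e ≠ f → ∀ v : V, v ∈ e → v ∉ f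

open Classical in
/-- `M` is a maximal matching of `G` : adding any further edge of `G` destroys
the matching property. -/
def IsMaximalMatching (G : SimpleGraph V) (M : Finset (Sym2 V)) : Prop :=
  IsMatching G M ∧ ∀ e ∈ G.edgeSet, e ∉ M → ¬ IsMatching G (insert e M)

/-- `M` is an induced matching of `G` : a matching such that no edge of `G`
meets two distinct edges of `M`. -/
def IsInducedMatching (G : SimpleGraph V) (M : Finset (Sym2 V)) : Prop :=
  IsMatching G M ∧
    ∀ e ∈ M, ∀ f ∈ M, e ≠ f → ∀ g ∈ G.edgeSet,
      (∃ v : V, v ∈ g ∧ v ∈ e) → ¬ ∃ v : V, v ∈ g ∧ v ∈ f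

/-- The matching number `match(G)` : the maximum size of a matching of `G`. -/
noncomputable def matchNum (G : SimpleGraph V) : ℕ :=
  sSup {n : ℕ | ∃ M : Finset (Sym2 V), IsMatching G M ∧ M.card = n}

/-- The minimum matching number `min-match(G)` : the minimum size of a maximal
matching of `G`. -/
noncomputable def minMatchNum (G : SimpleGraph V) : ℕ :=
  sInf {n : ℕ | ∃ M : Finset (Sym2 V), IsMaximalMatching G M ∧ M.card = n}

/-- The induced matching number `ind-match(G)` : the maximum size of an induced
matching of `G`. -/
noncomputable def indMatchNum (G : SimpleGraph V) : ℕ :=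
  sSup {n : ℕ | ∃ M : Finset (Sym2 V), IsInducedMatching G M ∧ M.card = n}

/-- The `S`-suspension `G^S` of `G` : a new vertex (here `none`) is joined to all
vertices not belonging to `S`. -/
def suspension (G : SimpleGraph V) (S : Set V) : SimpleGraph (Option V) :=
  SimpleGraph.fromRel fun a b =>
    match a, b with
    | some u, some v => G.Adj u v
    | some u, none => u ∉ S
    | none, _ => False

lemma susp_adj_ss (G : SimpleGraph V) (S : Set V) (u v : V) :
    (suspension G S).Adj (some u) (some v) ↔ G.Adj u v := by
  simp only [suspension, SimpleGraph.fromRel_adj]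
  constructor
  · rintro ⟨h, h2 | h2⟩
    · exact h2
    · exact h2.symm
  · intro h; exact ⟨by simpa using h.ne, Or.inl h⟩

lemma susp_adj_sn (G : SimpleGraph V) (S : Set V) (u : V) :
    (suspension G S).Adj (some u) none ↔ u ∉ S := by
  simp only [suspension, SimpleGraph.fromRel_adj]
  constructor
  · rintro ⟨h, h2 | h2⟩
    · exact h2
    · exact h2.elim
  · intro h; exact ⟨by simp, Or.inl h⟩

lemma susp_edge_rep (G : SimpleGraph V) (S : Set V) {e : Sym2 (Option V)}
    (he : e ∈ (suspension G S).edgeSet) (hn : (none : Option V) ∉ e) :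
    ∃ x y : V, e = s(some x, some y) ∧ G.Adj x y := by
  obtain ⟨a, b, rfl⟩ : ∃ a b, e = s(a, b) :=
    Sym2.ind (f := fun p => ∃ a b, p = s(a, b)) (fun a b => ⟨a, b, rfl⟩) e
  cases a with
  | none => exact absurd (by simp) hn
  | some x =>
    cases b with
    | none => exact absurd (by simp) hn
    | some y =>
      exact ⟨x, y, rfl, (susp_adj_ss G S x y).mp ((SimpleGraph.mem_edgeSet _).mp he)⟩

theorem indMatchNum_suspension {V : Type*} [Fintype V] (G : SimpleGraph V) (S : Set V)
    (hno_isolated : ∀ v : V, ∃ u : V, G.Adj v u)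
    (hS : ∀ u ∈ S, ∀ v ∈ S, ¬ G.Adj u v) :
    indMatchNum (suspension G S) = indMatchNum G := by
  classical
  unfold indMatchNum
  congr 1
  ext n
  simp only [Set.mem_setOf_eq]
  constructor
  · rintro ⟨M, ⟨⟨hsub, hdisj⟩, hind⟩, rfl⟩
    by_cases hnone : ∃ e ∈ M, (none : Option V) ∈ e
    · -- an edge of M uses the apex; then M is a singleton
      obtain ⟨e0, he0M, hne0⟩ := hnone
      -- identify e0 = s(none, some u)
      obtain ⟨c, hc⟩ := Sym2.mem_iff_exists.mp hne0
      subst hc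
      have hadj0 : (suspension G S).Adj none c :=
        (SimpleGraph.mem_edgeSet _).mp (hsub he0M)
      obtain ⟨u, rfl⟩ : ∃ u : V, c = some u := by
        cases c with
        | none => exact absurd hadj0 (suspension G S).irrefl
        | some u => exact ⟨u, rfl⟩
      -- M = {e0}
      have hMsing : M = {s(none, some u)} := by
        apply Finset.eq_singleton_iff_unique_mem.mpr
        refine ⟨he0M, fun f hfM => ?_⟩
        by_contra hfe
        have hfnone : (none : Option V) ∉ f := by
          intro h
          exact hdisj _ he0M f hfM (Ne.symm hfe) none (by simp) h
        obtain ⟨x, y, rfl, hxy⟩ := susp_edge_rep G S (hsub hfM) hfnone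
        have hnotboth : x ∉ S ∨ y ∉ S := by
          by_contra h
          push_neg at h
          exact hS x h.1 y h.2 hxy
        rcases hnotboth with hx | hy
        · exact hind _ hfM _ he0M hfe s(some x, none)
            ((SimpleGraph.mem_edgeSet _).mpr ((susp_adj_sn G S x).mpr hx))
            ⟨some x, by simp, by simp⟩ ⟨none, by simp, by simp⟩
        · exact hind _ hfM _ he0M hfe s(some y, none)
            ((SimpleGraph.mem_edgeSet _).mpr ((susp_adj_sn G S y).mpr hy))
            ⟨some y, by simp, by simp⟩ ⟨none, by simp, by simp⟩
      obtain ⟨w, hw⟩ := hno_isolated u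
      refine ⟨{s(u, w)}, ⟨⟨?_, ?_⟩, ?_⟩, by simp [hMsing]⟩
      · intro e he
        simp only [Finset.coe_singleton, Set.mem_singleton_iff] at he
        subst he
        exact (SimpleGraph.mem_edgeSet _).mpr hw
      · intro e he f hf hef
        simp only [Finset.mem_singleton] at he hf
        exact absurd (he.trans hf.symm) hef
      · intro e he f hf hef
        simp only [Finset.mem_singleton] at he hf
        exact absurd (he.trans hf.symm) hef
    · push_neg at hnone
      rcases Finset.eq_empty_or_nonempty M with rfl | ⟨e1, he1⟩
      · exact ⟨∅, ⟨⟨by simp, by simp⟩, by simp⟩, by simp⟩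
      -- get a default vertex
      obtain ⟨x1, y1, _, _⟩ := susp_edge_rep G S (hsub he1) (hnone e1 he1)
      set back : Sym2 (Option V) → Sym2 V := Sym2.map (fun o => o.getD x1) with hback
      have hback_eq : ∀ e ∈ M, ∀ x y : V, e = s(some x, some y) → back e = s(x, y) := by
        intro e _ x y h
        simp [hback, h]
      refine ⟨M.image back, ⟨⟨?_, ?_⟩, ?_⟩, ?_⟩
      · intro e' he'
        simp only [Finset.coe_image, Set.mem_image, Finset.mem_coe] at he'
        obtain ⟨e, heM, rfl⟩ := he'
        obtain ⟨x, y, rfl, hxy⟩ := susp_edge_rep G S (hsub heM) (hnone e heM)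
        rw [hback_eq _ heM x y rfl]
        exact (SimpleGraph.mem_edgeSet _).mpr hxy
      · intro e' he' f' hf' hef v hve hvf
        simp only [Finset.mem_image] at he' hf'
        obtain ⟨e, heM, rfl⟩ := he'
        obtain ⟨f, hfM, rfl⟩ := hf'
        obtain ⟨x, y, rfl, _⟩ := susp_edge_rep G S (hsub heM) (hnone e heM)
        obtain ⟨x', y', rfl, _⟩ := susp_edge_rep G S (hsub hfM) (hnone f hfM)
        rw [hback_eq _ heM x y rfl] at hve
        rw [hback_eq _ hfM x' y' rfl] at hvf
        have hef' : s(some x, some y) ≠ s(some x', some y') := fun h => hef (by rw [h])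
        refine hdisj _ heM _ hfM hef' (some v) ?_ ?_
        · rcases Sym2.mem_iff.mp hve with rfl | rfl <;> simp
        · rcases Sym2.mem_iff.mp hvf with rfl | rfl <;> simp
      · rintro e' he' f' hf' hef g hg ⟨v, hvg, hve⟩ ⟨w, hwg, hwf⟩
        simp only [Finset.mem_image] at he' hf'
        obtain ⟨e, heM, rfl⟩ := he'
        obtain ⟨f, hfM, rfl⟩ := hf'
        obtain ⟨x, y, rfl, _⟩ := susp_edge_rep G S (hsub heM) (hnone e heM)
        obtain ⟨x', y', rfl, _⟩ := susp_edge_rep G S (hsub hfM) (hnone f hfM)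
        rw [hback_eq _ heM x y rfl] at hve
        rw [hback_eq _ hfM x' y' rfl] at hwf
        have hef' : s(some x, some y) ≠ s(some x', some y') := fun h => hef (by rw [h])
        refine hind _ heM _ hfM hef' (Sym2.map some g) ?_ ?_ ?_
        · obtain ⟨p, q, rfl⟩ : ∃ p q, g = s(p, q) :=
            Sym2.ind (f := fun z => ∃ p q, z = s(p, q)) (fun p q => ⟨p, q, rfl⟩) g
          exact (SimpleGraph.mem_edgeSet _).mpr
            ((susp_adj_ss G S p q).mpr ((SimpleGraph.mem_edgeSet _).mp hg))
        · refine ⟨some v, Sym2.mem_map.mpr ⟨v, hvg, rfl⟩, ?_⟩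
          rcases Sym2.mem_iff.mp hve with rfl | rfl <;> simp
        · refine ⟨some w, Sym2.mem_map.mpr ⟨w, hwg, rfl⟩, ?_⟩
          rcases Sym2.mem_iff.mp hwf with rfl | rfl <;> simp
      · rw [Finset.card_image_of_injOn]
        intro e heM f hfM hb
        obtain ⟨x, y, rfl, _⟩ := susp_edge_rep G S (hsub heM) (hnone e heM)
        obtain ⟨x', y', rfl, _⟩ := susp_edge_rep G S (hsub hfM) (hnone f hfM)
        rw [hback_eq _ heM x y rfl, hback_eq _ hfM x' y' rfl] at hb
        have := congrArg (Sym2.map some) hb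
        simpa using this
  · rintro ⟨M, ⟨⟨hsub, hdisj⟩, hind⟩, rfl⟩
    refine ⟨M.image (Sym2.map some), ⟨⟨?_, ?_⟩, ?_⟩, ?_⟩
    · intro e' he'
      simp only [Finset.coe_image, Set.mem_image, Finset.mem_coe] at he'
      obtain ⟨e, heM, rfl⟩ := he'
      obtain ⟨x, y, rfl⟩ : ∃ x y, e = s(x, y) :=
        Sym2.ind (f := fun z => ∃ p q, z = s(p, q)) (fun p q => ⟨p, q, rfl⟩) e
      exact (SimpleGraph.mem_edgeSet _).mpr
        ((susp_adj_ss G S x y).mpr ((SimpleGraph.mem_edgeSet _).mp (hsub heM)))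
    · intro e' he' f' hf' hef v hve hvf
      simp only [Finset.mem_image] at he' hf'
      obtain ⟨e, heM, rfl⟩ := he'
      obtain ⟨f, hfM, rfl⟩ := hf'
      have hef' : e ≠ f := fun h => hef (by rw [h])
      obtain ⟨a, ha, rfl⟩ := Sym2.mem_map.mp hve
      obtain ⟨b, hb, hba⟩ := Sym2.mem_map.mp hvf
      obtain rfl : a = b := by simpa using hba.symm
      exact hdisj _ heM _ hfM hef' a ha hb
    · rintro e' he' f' hf' hef g hg ⟨v, hvg, hve⟩ ⟨w, hwg, hwf⟩
      simp only [Finset.mem_image] at he' hf'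
      obtain ⟨e, heM, rfl⟩ := he'
      obtain ⟨f, hfM, rfl⟩ := hf'
      have hef' : e ≠ f := fun h => hef (by rw [h])
      obtain ⟨a, ha, rfl⟩ := Sym2.mem_map.mp hve
      obtain ⟨b, hb, rfl⟩ := Sym2.mem_map.mp hwf
      have hab : a ≠ b := fun h => hdisj _ heM _ hfM hef' a ha (h ▸ hb)
      have hg' : g = s(some a, some b) :=
        (Sym2.mem_and_mem_iff (by simpa using hab)).mp ⟨hvg, hwg⟩
      subst hg'
      have hGab : G.Adj a b :=
        (susp_adj_ss G S a b).mp ((SimpleGraph.mem_edgeSet _).mp hg)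
      exact hind _ heM _ hfM hef' s(a, b) ((SimpleGraph.mem_edgeSet _).mpr hGab)
        ⟨a, by simp, ha⟩ ⟨b, by simp, hb⟩
    · exact Finset.card_image_of_injective _ (Sym2.map.injective (Option.some_injective V))

end MatchingPaper
end

section
/- Let n ≥ 2 be an even integer and let G be a connected finite simple graph with |V(G)| = n. If min-match(G) = n/2, then G is isomorphic to the complete graph K_n or to the complete bipartite graph K_{n/2,n/2}; in particular ind-match(G) = 1, so there is no connected simple graph G on n vertices with ind-match(G) = p and min-match(G) = match(G) = n/2 for any p ≥ 2. -/
namespace MatchingPaper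

variable {V : Type*}

section Proofs
open Classical Finset

set_option linter.unusedSectionVars false

variable {G : SimpleGraph V}

variable {G : SimpleGraph V}

lemma IsMatching.subset' {M N : Finset (Sym2 V)} (hN : IsMatching G N) (hMN : M ⊆ N) :
    IsMatching G M :=
  ⟨fun e he => hN.1 (hMN (by exact_mod_cast he)),
   fun e he f hf => hN.2 e (hMN he) f (hMN hf)⟩

lemma edge_rep {e : Sym2 V} (he : e ∈ G.edgeSet) : ∃ x y, G.Adj x y ∧ e = s(x, y) := by
  induction e using Sym2.ind with
  | _ x y => exact ⟨x, y, G.mem_edgeSet.1 he, rfl⟩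

lemma mem_edge_unique {M : Finset (Sym2 V)} (hM : IsMatching G M) {e f : Sym2 V} {v : V}
    (he : e ∈ M) (hf : f ∈ M) (hv : v ∈ e) (hv' : v ∈ f) : e = f := by
  by_contra h
  exact hM.2 e he f hf h v hv hv'

lemma matching_insert {M : Finset (Sym2 V)} {e : Sym2 V} (hM : IsMatching G M)
    (he : e ∈ G.edgeSet) (hdis : ∀ f ∈ M, ∀ z, z ∈ e → z ∉ f) :
    IsMatching G (insert e M) := by
  constructor
  · intro g hg
    rcases Finset.mem_insert.1 (by exact_mod_cast hg) with h | h
    · exact h ▸ he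
    · exact hM.1 h
  · intro g hg h hh hgh v hv
    rcases Finset.mem_insert.1 hg with hg | hg <;> rcases Finset.mem_insert.1 hh with hh | hh
    · exact absurd (hg.trans hh.symm) hgh
    · exact hdis h hh v (hg ▸ hv)
    · intro hvh
      exact hdis g hg v (hh ▸ hvh) hv
    · exact hM.2 g hg h hh hgh v hv

noncomputable def sat [Fintype V] (M : Finset (Sym2 V)) : Finset V :=
  univ.filter (fun v => ∃ e ∈ M, v ∈ e)

lemma mem_sat [Fintype V] {M : Finset (Sym2 V)} {v : V} :
    v ∈ sat M ↔ ∃ e ∈ M, v ∈ e := by simp [sat]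

lemma card_sat [Fintype V] {M : Finset (Sym2 V)} (hM : IsMatching G M) :
    (sat M).card = 2 * M.card := by
  have hsat : sat M = M.biUnion (fun e => univ.filter (· ∈ e)) := by
    ext v; simp [sat]
  rw [hsat, Finset.card_biUnion]
  · rw [Finset.sum_congr rfl (fun e he => ?_), Finset.sum_const, smul_eq_mul, mul_comm]
    obtain ⟨x, y, hxy, rfl⟩ := edge_rep (hM.1 he)
    have : (univ.filter (· ∈ s(x, y))) = {x, y} := by
      ext z; simp [Sym2.mem_iff]
    rw [this, Finset.card_insert_of_notMem (by simp [hxy.ne]), Finset.card_singleton]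
  · intro e he f hf hef
    rw [Function.onFun, Finset.disjoint_left]
    intro v hv hv'
    simp only [Finset.mem_filter] at hv hv'
    exact hM.2 e he f hf hef v hv.2 hv'.2

lemma exists_maximal_superset [Fintype V] {M₀ : Finset (Sym2 V)} (h₀ : IsMatching G M₀) :
    ∃ M, IsMaximalMatching G M ∧ M₀ ⊆ M := by
  have hsub : ∀ {N : Finset (Sym2 V)}, IsMatching G N → N ⊆ G.edgeFinset := by
    intro N hN e he
    exact SimpleGraph.mem_edgeFinset.2 (hN.1 he)
  set T := G.edgeFinset.powerset.filter (fun M => IsMatching G M ∧ M₀ ⊆ M) with hT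
  have hne : T.Nonempty := ⟨M₀, by simp [hT, Finset.mem_powerset, hsub h₀, h₀]⟩
  obtain ⟨M, hMT, hmax⟩ := Finset.exists_max_image T Finset.card hne
  simp only [hT, Finset.mem_filter, Finset.mem_powerset] at hMT
  refine ⟨M, ⟨hMT.2.1, ?_⟩, hMT.2.2⟩
  intro e he hem hins
  have : insert e M ∈ T := by
    simp only [hT, Finset.mem_filter, Finset.mem_powerset]
    exact ⟨hsub hins, hins, hMT.2.2.trans (Finset.subset_insert _ _)⟩
  have := hmax _ this
  rw [Finset.card_insert_of_notMem hem] at this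
  omega
/-- A perfect matching: a matching covering every vertex. -/
def IsPerfect (G : SimpleGraph V) (M : Finset (Sym2 V)) : Prop :=
  IsMatching G M ∧ ∀ v : V, ∃ e ∈ M, v ∈ e

section Half
variable [Fintype V] {n : ℕ}

lemma perfect_of_maximal (heven : Even n) (hcard : Fintype.card V = n)
    (hH : ∀ M : Finset (Sym2 V), IsMaximalMatching G M → n / 2 ≤ M.card)
    {M : Finset (Sym2 V)} (hM : IsMaximalMatching G M) : IsPerfect G M := by
  refine ⟨hM.1, ?_⟩
  have h1 := card_sat hM.1
  have h2 : (sat M).card ≤ n := hcard ▸ (sat M).card_le_univ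
  have h3 := hH M hM
  obtain ⟨k, hk⟩ := heven
  have hsatcard : (sat M).card = n := by omega
  have : sat M = univ := Finset.eq_univ_of_card _ (by rw [hsatcard, hcard])
  intro v
  exact mem_sat.1 (this ▸ Finset.mem_univ v)

lemma near_perfect (hn : 2 ≤ n) (heven : Even n) (hcard : Fintype.card V = n)
    (hH : ∀ M : Finset (Sym2 V), IsMaximalMatching G M → n / 2 ≤ M.card)
    {M : Finset (Sym2 V)} (hM : IsMatching G M) {w w' : V} (hww : w ≠ w')
    (hcov : ∀ z : V, z ≠ w → z ≠ w' → ∃ e ∈ M, z ∈ e)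
    (hw : ∀ e ∈ M, w ∉ e) (hw' : ∀ e ∈ M, w' ∉ e) : G.Adj w w' := by
  by_contra hadj
  have hmax : IsMaximalMatching G M := by
    refine ⟨hM, ?_⟩
    intro e he hem hins
    obtain ⟨p, q, hpq, rfl⟩ := edge_rep he
    have hp : p = w ∨ p = w' := by
      by_contra h
      push_neg at h
      obtain ⟨f, hf, hpf⟩ := hcov p h.1 h.2
      have : s(p,q) ≠ f := fun hh => hem (hh ▸ hf)
      exact hins.2 _ (Finset.mem_insert_self _ _) f (Finset.mem_insert_of_mem hf) this p
        (Sym2.mem_mk_left p q) hpf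
    have hq : q = w ∨ q = w' := by
      by_contra h
      push_neg at h
      obtain ⟨f, hf, hqf⟩ := hcov q h.1 h.2
      have : s(p,q) ≠ f := fun hh => hem (hh ▸ hf)
      exact hins.2 _ (Finset.mem_insert_self _ _) f (Finset.mem_insert_of_mem hf) this q
        (Sym2.mem_mk_right p q) hqf
    rcases hp with rfl | rfl <;> rcases hq with rfl | rfl
    · exact hpq.ne rfl
    · exact hadj hpq
    · exact hadj (hpq.symm)
    · exact hpq.ne rfl
  have h3 := hH M hmax
  have h1 := card_sat hM
  have hsat : sat M = univ \ {w, w'} := by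
    ext z
    simp only [mem_sat, Finset.mem_sdiff, Finset.mem_univ, Finset.mem_insert,
      Finset.mem_singleton, true_and]
    constructor
    · rintro ⟨e, he, hz⟩
      push_neg
      constructor
      · rintro rfl; exact hw e he hz
      · rintro rfl; exact hw' e he hz
    · intro h
      push_neg at h
      exact hcov z h.1 h.2
  have hcard2 : (sat M).card = n - 2 := by
    rw [hsat, Finset.card_sdiff_of_subset (by simp)]
    rw [Finset.card_univ, hcard, Finset.card_insert_of_notMem (by simp [hww]),
      Finset.card_singleton]
  obtain ⟨k, hk⟩ := heven
  omega

lemma pair_swap (hn : 2 ≤ n) (heven : Even n) (hcard : Fintype.card V = n)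
    (hH : ∀ M : Finset (Sym2 V), IsMaximalMatching G M → n / 2 ≤ M.card) {M : Finset (Sym2 V)} (hP : IsPerfect G M) {x y u v : V}
    (hxy : s(x, y) ∈ M) (huv : s(u, v) ∈ M) (hne : s(x, y) ≠ s(u, v))
    (hadj : G.Adj x u) : G.Adj y v := by
  have hM := hP.1
  have hxyE := hM.1 hxy
  have huvE := hM.1 huv
  have hxne : x ≠ y := by
    intro h; exact G.not_isDiag_of_mem_edgeSet hxyE (by rw [Sym2.mk_isDiag_iff]; exact h)
  have hune : u ≠ v := by
    intro h; exact G.not_isDiag_of_mem_edgeSet huvE (by rw [Sym2.mk_isDiag_iff]; exact h)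
  have hdisj : ∀ z, z ∈ s(x,y) → z ∉ s(u,v) := fun z => hM.2 _ hxy _ huv hne z
  have hxv : x ≠ v := fun h => hdisj x (Sym2.mem_mk_left _ _) (h ▸ Sym2.mem_mk_right u v)
  have hyu : y ≠ u := fun h => hdisj y (Sym2.mem_mk_right _ _) (h ▸ Sym2.mem_mk_left u v)
  have hyv : y ≠ v := fun h => hdisj y (Sym2.mem_mk_right _ _) (h ▸ Sym2.mem_mk_right u v)
  set M' : Finset (Sym2 V) := insert s(x, u) ((M.erase s(x,y)).erase s(u,v)) with hM'
  have herasesub : (M.erase s(x,y)).erase s(u,v) ⊆ M :=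
    (Finset.erase_subset _ _).trans (Finset.erase_subset _ _)
  have hM'match : IsMatching G M' := by
    refine matching_insert (hP.1.subset' herasesub) (G.mem_edgeSet.2 hadj) ?_
    intro f hf z hz hzf
    have hfM : f ∈ M := herasesub hf
    have hfxy : f ≠ s(x,y) := Finset.ne_of_mem_erase (Finset.mem_of_mem_erase hf)
    have hfuv : f ≠ s(u,v) := Finset.ne_of_mem_erase hf
    rcases Sym2.mem_iff.1 hz with rfl | rfl
    · exact hM.2 _ hxy f hfM hfxy.symm z (Sym2.mem_mk_left _ _) hzf
    · exact hM.2 _ huv f hfM hfuv.symm z (Sym2.mem_mk_left _ _) hzf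
  refine near_perfect hn heven hcard hH hM'match hyv ?_ ?_ ?_
  · intro z hzy hzv
    obtain ⟨f, hf, hzf⟩ := hP.2 z
    by_cases h1 : f = s(x,y)
    · subst h1
      rcases Sym2.mem_iff.1 hzf with h | h
      · exact ⟨s(x,u), Finset.mem_insert_self _ _, by rw [h]; exact Sym2.mem_mk_left _ _⟩
      · exact absurd h hzy
    · by_cases h2 : f = s(u,v)
      · subst h2
        rcases Sym2.mem_iff.1 hzf with h | h
        · exact ⟨s(x,u), Finset.mem_insert_self _ _, by rw [h]; exact Sym2.mem_mk_right _ _⟩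
        · exact absurd h hzv
      · exact ⟨f, Finset.mem_insert_of_mem (Finset.mem_erase.2 ⟨h2, Finset.mem_erase.2 ⟨h1, hf⟩⟩),
          hzf⟩
  · intro e he hy
    rcases Finset.mem_insert.1 he with rfl | he
    · rcases Sym2.mem_iff.1 hy with h | h
      · exact hxne h.symm
      · exact hyu h
    · exact hM.2 _ hxy _ (herasesub he) (Finset.ne_of_mem_erase (Finset.mem_of_mem_erase he)).symm
        y (Sym2.mem_mk_right _ _) hy
  · intro e he hv
    rcases Finset.mem_insert.1 he with rfl | he
    · rcases Sym2.mem_iff.1 hv with h | h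
      · exact hxv h.symm
      · exact hune h.symm
    · exact hM.2 _ huv _ (herasesub he) (Finset.ne_of_mem_erase he).symm
        v (Sym2.mem_mk_right _ _) hv


lemma rotate {M : Finset (Sym2 V)} (hP : IsPerfect G M) {x y u v : V}
    (hxy : s(x, y) ∈ M) (huv : s(u, v) ∈ M) (hne : s(x, y) ≠ s(u, v))
    (hxu : G.Adj x u) (hyv : G.Adj y v) :
    IsPerfect G (insert s(x, u) (insert s(y, v) ((M.erase s(x,y)).erase s(u,v)))) := by
  have hM := hP.1
  have hdisj : ∀ z, z ∈ s(x,y) → z ∉ s(u,v) := fun z => hM.2 _ hxy _ huv hne z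
  have hxne : x ≠ y := fun h =>
    G.not_isDiag_of_mem_edgeSet (hM.1 hxy) (by rw [Sym2.mk_isDiag_iff]; exact h)
  have hune : u ≠ v := fun h =>
    G.not_isDiag_of_mem_edgeSet (hM.1 huv) (by rw [Sym2.mk_isDiag_iff]; exact h)
  have hxu' : x ≠ u := fun h => hdisj x (Sym2.mem_mk_left _ _) (h ▸ Sym2.mem_mk_left u v)
  have hxv : x ≠ v := fun h => hdisj x (Sym2.mem_mk_left _ _) (h ▸ Sym2.mem_mk_right u v)
  have hyu : y ≠ u := fun h => hdisj y (Sym2.mem_mk_right _ _) (h ▸ Sym2.mem_mk_left u v)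
  have hyv' : y ≠ v := fun h => hdisj y (Sym2.mem_mk_right _ _) (h ▸ Sym2.mem_mk_right u v)
  have herasesub : (M.erase s(x,y)).erase s(u,v) ⊆ M :=
    (Finset.erase_subset _ _).trans (Finset.erase_subset _ _)
  have hEdis : ∀ f ∈ (M.erase s(x,y)).erase s(u,v), ∀ z : V,
      (z = x ∨ z = y ∨ z = u ∨ z = v) → z ∉ f := by
    intro f hf z hz hzf
    have hfM : f ∈ M := herasesub hf
    have hfxy : f ≠ s(x,y) := Finset.ne_of_mem_erase (Finset.mem_of_mem_erase hf)
    have hfuv : f ≠ s(u,v) := Finset.ne_of_mem_erase hf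
    rcases hz with rfl | rfl | rfl | rfl
    · exact hM.2 _ hxy f hfM hfxy.symm z (Sym2.mem_mk_left _ _) hzf
    · exact hM.2 _ hxy f hfM hfxy.symm z (Sym2.mem_mk_right _ _) hzf
    · exact hM.2 _ huv f hfM hfuv.symm z (Sym2.mem_mk_left _ _) hzf
    · exact hM.2 _ huv f hfM hfuv.symm z (Sym2.mem_mk_right _ _) hzf
  have hstep1 : IsMatching G (insert s(y,v) ((M.erase s(x,y)).erase s(u,v))) := by
    refine matching_insert (hM.subset' herasesub) (G.mem_edgeSet.2 hyv) ?_
    intro f hf z hz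
    rcases Sym2.mem_iff.1 hz with rfl | rfl
    · exact hEdis f hf z (Or.inr (Or.inl rfl))
    · exact hEdis f hf z (Or.inr (Or.inr (Or.inr rfl)))
  constructor
  · refine matching_insert hstep1 (G.mem_edgeSet.2 hxu) ?_
    intro f hf z hz
    rcases Finset.mem_insert.1 hf with rfl | hf
    · intro hzf
      rcases Sym2.mem_iff.1 hz with h1 | h1 <;> rcases Sym2.mem_iff.1 hzf with h2 | h2
      · exact hxne (h1.symm.trans h2)
      · exact hxv (h1.symm.trans h2)
      · exact hyu (h1.symm.trans h2).symm
      · exact hune (h1.symm.trans h2)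
    · rcases Sym2.mem_iff.1 hz with rfl | rfl
      · exact hEdis f hf z (Or.inl rfl)
      · exact hEdis f hf z (Or.inr (Or.inr (Or.inl rfl)))
  · intro z
    obtain ⟨f, hf, hzf⟩ := hP.2 z
    by_cases h1 : f = s(x,y)
    · subst h1
      rcases Sym2.mem_iff.1 hzf with h | h
      · exact ⟨s(x,u), Finset.mem_insert_self _ _, by rw [h]; exact Sym2.mem_mk_left _ _⟩
      · exact ⟨s(y,v), Finset.mem_insert_of_mem (Finset.mem_insert_self _ _),
          by rw [h]; exact Sym2.mem_mk_left _ _⟩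
    · by_cases h2 : f = s(u,v)
      · subst h2
        rcases Sym2.mem_iff.1 hzf with h | h
        · exact ⟨s(x,u), Finset.mem_insert_self _ _, by rw [h]; exact Sym2.mem_mk_right _ _⟩
        · exact ⟨s(y,v), Finset.mem_insert_of_mem (Finset.mem_insert_self _ _),
            by rw [h]; exact Sym2.mem_mk_right _ _⟩
      · exact ⟨f, Finset.mem_insert_of_mem (Finset.mem_insert_of_mem
          (Finset.mem_erase.2 ⟨h2, Finset.mem_erase.2 ⟨h1, hf⟩⟩)), hzf⟩

lemma triple_swap (hn : 2 ≤ n) (heven : Even n) (hcard : Fintype.card V = n)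
    (hH : ∀ M : Finset (Sym2 V), IsMaximalMatching G M → n / 2 ≤ M.card)
    {M : Finset (Sym2 V)} (hP : IsPerfect G M) {x y u v p q : V}
    (h1 : s(x,y) ∈ M) (h2 : s(u,v) ∈ M) (h3 : s(p,q) ∈ M)
    (h12 : s(x,y) ≠ s(u,v)) (h13 : s(x,y) ≠ s(p,q)) (h23 : s(u,v) ≠ s(p,q))
    (hxu : G.Adj x u) (hvp : G.Adj v p) : G.Adj y q := by
  have hyv : G.Adj y v := pair_swap hn heven hcard hH hP h1 h2 h12 hxu
  have hP' := rotate hP h1 h2 h12 hxu hyv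
  have hvyM' : s(v,y) ∈ insert s(x, u) (insert s(y, v) ((M.erase s(x,y)).erase s(u,v))) := by
    have hsw : s(v,y) = s(y,v) := Sym2.eq_swap
    rw [hsw]
    exact Finset.mem_insert_of_mem (Finset.mem_insert_self _ _)
  have hpqM' : s(p,q) ∈ insert s(x, u) (insert s(y, v) ((M.erase s(x,y)).erase s(u,v))) :=
    Finset.mem_insert_of_mem (Finset.mem_insert_of_mem
      (Finset.mem_erase.2 ⟨fun h => h23 h.symm, Finset.mem_erase.2 ⟨fun h => h13 h.symm, h3⟩⟩))
  have hne' : s(v,y) ≠ s(p,q) := by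
    intro h
    have hv : v ∈ s(p,q) := by rw [← h]; exact Sym2.mem_mk_left _ _
    exact hP.1.2 _ h2 _ h3 h23 v (Sym2.mem_mk_right _ _) hv
  exact pair_swap hn heven hcard hH hP' hvyM' hpqM' hne' hvp


/-- Two edges are similar if some `G`-edge joins them. -/
def Sim (G : SimpleGraph V) (e f : Sym2 V) : Prop := ∃ a b, a ∈ e ∧ b ∈ f ∧ G.Adj a b

lemma sim_trans (hn : 2 ≤ n) (heven : Even n) (hcard : Fintype.card V = n)
    (hH : ∀ M : Finset (Sym2 V), IsMaximalMatching G M → n / 2 ≤ M.card)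
    {M : Finset (Sym2 V)} (hP : IsPerfect G M) {e f g : Sym2 V}
    (he : e ∈ M) (hf : f ∈ M) (hg : g ∈ M)
    (hef : e ≠ f) (hfg : f ≠ g) (heg : e ≠ g)
    (h1 : Sim G e f) (h2 : Sim G f g) : Sim G e g := by
  obtain ⟨a, b, ha, hb, hab⟩ := h1
  obtain ⟨c, d, hc, hd, hcd⟩ := h2
  have hea := Sym2.other_spec ha
  have hfb := Sym2.other_spec hb
  have hgd := Sym2.other_spec hd
  set a' := Sym2.Mem.other ha with ha'
  set b' := Sym2.Mem.other hb with hb'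
  set d' := Sym2.Mem.other hd with hd'
  have ha'mem : a' ∈ e := Sym2.other_mem ha
  have hd'mem : d' ∈ g := Sym2.other_mem hd
  have heM : s(a, a') ∈ M := hea ▸ he
  have hfM : s(b, b') ∈ M := hfb ▸ hf
  have hgM : s(d, d') ∈ M := hgd ▸ hg
  have hef' : s(a,a') ≠ s(b,b') := by rw [hea, hfb]; exact hef
  have hfg' : s(b,b') ≠ s(d,d') := by rw [hfb, hgd]; exact hfg
  have heg' : s(a,a') ≠ s(d,d') := by rw [hea, hgd]; exact heg
  have hcmem : c ∈ s(b, b') := hfb ▸ hc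
  rcases Sym2.mem_iff.1 hcmem with hcb | hcb
  · -- c = b : first use pair_swap to get Adj a' b'
    have hab' : G.Adj a' b' := pair_swap hn heven hcard hH hP heM hfM hef' hab
    have heM2 : s(a', a) ∈ M := by rw [Sym2.eq_swap]; exact heM
    have hfM2 : s(b', b) ∈ M := by rw [Sym2.eq_swap]; exact hfM
    have h12 : s(a',a) ≠ s(b',b) := by
      rw [(Sym2.eq_swap : s(a',a) = s(a,a')), (Sym2.eq_swap : s(b',b) = s(b,b'))]; exact hef'
    have h23 : s(b',b) ≠ s(d,d') := by
      rw [(Sym2.eq_swap : s(b',b) = s(b,b'))]; exact hfg'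
    have h13 : s(a',a) ≠ s(d,d') := by
      rw [(Sym2.eq_swap : s(a',a) = s(a,a'))]; exact heg'
    have hbd : G.Adj b d := hcb ▸ hcd
    have := triple_swap hn heven hcard hH hP heM2 hfM2 hgM h12 h13 h23 hab' hbd
    exact ⟨a, d', ha, hd'mem, this⟩
  · -- c = b'
    have hb'd : G.Adj b' d := hcb ▸ hcd
    have := triple_swap hn heven hcard hH hP heM hfM hgM hef' heg' hfg' hab hb'd
    exact ⟨a', d', ha'mem, hd'mem, this⟩

lemma walk_R (hn : 2 ≤ n) (heven : Even n) (hcard : Fintype.card V = n)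
    (hH : ∀ M : Finset (Sym2 V), IsMaximalMatching G M → n / 2 ≤ M.card)
    {M : Finset (Sym2 V)} (hP : IsPerfect G M) {z z' : V} (w : G.Walk z z') :
    ∀ e f : Sym2 V, e ∈ M → f ∈ M → z ∈ e → z' ∈ f → (e = f ∨ Sim G e f) := by
  induction w with
  | nil =>
    intro e f he hf hz hz'
    exact Or.inl (mem_edge_unique hP.1 he hf hz hz')
  | @cons z z1 z'' hadj p ih =>
    intro e f he hf hz hz'
    obtain ⟨g, hg, hz1g⟩ := hP.2 z1
    have hR2 := ih g f hg hf hz1g hz'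
    by_cases heg : e = g
    · subst heg; exact hR2
    · have hS1 : Sim G e g := ⟨z, z1, hz, hz1g, hadj⟩
      by_cases hgf : g = f
      · subst hgf; exact Or.inr hS1
      · have hS2 : Sim G g f := hR2.resolve_left hgf
        by_cases hef : e = f
        · exact Or.inl hef
        · exact Or.inr (sim_trans hn heven hcard hH hP he hg hf heg hgf hef hS1 hS2)

lemma all_sim (hn : 2 ≤ n) (heven : Even n) (hcard : Fintype.card V = n)
    (hH : ∀ M : Finset (Sym2 V), IsMaximalMatching G M → n / 2 ≤ M.card)
    (hconn : G.Connected) {M : Finset (Sym2 V)} (hP : IsPerfect G M) {e f : Sym2 V}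
    (he : e ∈ M) (hf : f ∈ M) (hef : e ≠ f) : Sim G e f := by
  obtain ⟨x, y, hxy, rfl⟩ := edge_rep (hP.1.1 he)
  obtain ⟨u, v, huv, rfl⟩ := edge_rep (hP.1.1 hf)
  obtain ⟨w⟩ := hconn.preconnected x u
  have := walk_R hn heven hcard hH hP w _ _ he hf (Sym2.mem_mk_left _ _) (Sym2.mem_mk_left _ _)
  exact this.resolve_left hef

lemma pairs (hn : 2 ≤ n) (heven : Even n) (hcard : Fintype.card V = n)
    (hH : ∀ M : Finset (Sym2 V), IsMaximalMatching G M → n / 2 ≤ M.card)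
    (hconn : G.Connected) {M : Finset (Sym2 V)} (hP : IsPerfect G M) {x y u v : V}
    (h1 : s(x,y) ∈ M) (h2 : s(u,v) ∈ M) (hne : s(x,y) ≠ s(u,v)) :
    (G.Adj x u ∧ G.Adj y v) ∨ (G.Adj x v ∧ G.Adj y u) := by
  obtain ⟨a, b, ha, hb, hab⟩ := all_sim hn heven hcard hH hconn hP h1 h2 hne
  have h1' : s(y,x) ∈ M := by rw [Sym2.eq_swap]; exact h1
  have h2' : s(v,u) ∈ M := by rw [Sym2.eq_swap]; exact h2
  have hne1 : s(y,x) ≠ s(u,v) := by rw [(Sym2.eq_swap : s(y,x) = s(x,y))]; exact hne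
  have hne2 : s(x,y) ≠ s(v,u) := by rw [(Sym2.eq_swap : s(v,u) = s(u,v))]; exact hne
  have hne3 : s(y,x) ≠ s(v,u) := by
    rw [(Sym2.eq_swap : s(y,x) = s(x,y)), (Sym2.eq_swap : s(v,u) = s(u,v))]; exact hne
  rcases Sym2.mem_iff.1 ha with rfl | rfl <;> rcases Sym2.mem_iff.1 hb with rfl | rfl
  · exact Or.inl ⟨hab, pair_swap hn heven hcard hH hP h1 h2 hne hab⟩
  · exact Or.inr ⟨hab, pair_swap hn heven hcard hH hP h1 h2' hne2 hab⟩
  · exact Or.inr ⟨pair_swap hn heven hcard hH hP h1' h2 hne1 hab, hab⟩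
  · exact Or.inl ⟨pair_swap hn heven hcard hH hP h1' h2' hne3 hab, hab⟩


lemma mem_swap {M : Finset (Sym2 V)} {a b : V} (h : s(a,b) ∈ M) : s(b,a) ∈ M := by
  rw [Sym2.eq_swap]; exact h

lemma ne_swap_l {a b : V} {c : Sym2 V} (h : s(a,b) ≠ c) : s(b,a) ≠ c := by
  rw [Sym2.eq_swap]; exact h

lemma ne_swap_r {a b : V} {c : Sym2 V} (h : c ≠ s(a,b)) : c ≠ s(b,a) := by
  rw [Sym2.eq_swap]; exact h

/-- All four cross edges between two matching edges are present. -/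
def Dbl (G : SimpleGraph V) (e f : Sym2 V) : Prop :=
  ∃ x y u v : V, e = s(x,y) ∧ f = s(u,v) ∧
    G.Adj x u ∧ G.Adj x v ∧ G.Adj y u ∧ G.Adj y v

lemma dbl_symm {e f : Sym2 V} (h : Dbl G e f) : Dbl G f e := by
  obtain ⟨x, y, u, v, he, hf, h1, h2, h3, h4⟩ := h
  exact ⟨u, v, x, y, hf, he, h1.symm, h3.symm, h2.symm, h4.symm⟩

lemma dbl_of_two (hn : 2 ≤ n) (heven : Even n) (hcard : Fintype.card V = n)
    (hH : ∀ M : Finset (Sym2 V), IsMaximalMatching G M → n / 2 ≤ M.card)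
    {M : Finset (Sym2 V)} (hP : IsPerfect G M) {x y u v : V}
    (h1 : s(x,y) ∈ M) (h2 : s(u,v) ∈ M) (hne : s(x,y) ≠ s(u,v))
    (ha : G.Adj x u) (hb : G.Adj x v) : Dbl G s(x,y) s(u,v) := by
  have hyv : G.Adj y v := pair_swap hn heven hcard hH hP h1 h2 hne ha
  have hyu : G.Adj y u :=
    pair_swap hn heven hcard hH hP h1 (mem_swap h2) (ne_swap_r hne) hb
  exact ⟨x, y, u, v, rfl, rfl, ha, hb, hyu, hyv⟩

lemma dbl_spread (hn : 2 ≤ n) (heven : Even n) (hcard : Fintype.card V = n)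
    (hH : ∀ M : Finset (Sym2 V), IsMaximalMatching G M → n / 2 ≤ M.card)
    (hconn : G.Connected) {M : Finset (Sym2 V)} (hP : IsPerfect G M) {e f g : Sym2 V}
    (he : e ∈ M) (hf : f ∈ M) (hg : g ∈ M)
    (hef : e ≠ f) (heg : e ≠ g) (hfg : f ≠ g) (hD : Dbl G e f) : Dbl G e g := by
  obtain ⟨x, y, u, v, rfl, rfl, hxu, hxv, hyu, hyv⟩ := hD
  obtain ⟨p0, q0, hpq0, hgeq⟩ := edge_rep (hP.1.1 hg)
  subst hgeq
  have key : ∃ p q : V, s(p,q) = s(p0,q0) ∧ G.Adj u p ∧ G.Adj v q := by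
    rcases pairs hn heven hcard hH hconn hP hf hg hfg with ⟨hA, hB⟩ | ⟨hA, hB⟩
    · exact ⟨p0, q0, rfl, hA, hB⟩
    · exact ⟨q0, p0, Sym2.eq_swap, hA, hB⟩
  obtain ⟨p, q, hgswap, hup, hvq⟩ := key
  rw [← hgswap] at hg heg hfg ⊢
  have hqp : s(q,p) ∈ M := mem_swap hg
  have heg' : s(x,y) ≠ s(q,p) := ne_swap_r heg
  have hfg' : s(u,v) ≠ s(q,p) := ne_swap_r hfg
  have hA1 : G.Adj y p :=
    triple_swap hn heven hcard hH hP he hf hqp hef heg' hfg' hxu hvq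
  have hA2 : G.Adj x p :=
    triple_swap hn heven hcard hH hP (mem_swap he) hf hqp (ne_swap_l hef)
      (ne_swap_l heg') hfg' hyu hvq
  have hA3 : G.Adj y q :=
    triple_swap hn heven hcard hH hP he (mem_swap hf) hg (ne_swap_r hef) heg
      (ne_swap_l hfg) hxv hup
  have hA4 : G.Adj x q :=
    triple_swap hn heven hcard hH hP (mem_swap he) (mem_swap hf) hg
      (by exact ne_swap_l (ne_swap_r hef)) (ne_swap_l heg) (ne_swap_l hfg) hyv hup
  exact ⟨x, y, p, q, rfl, rfl, hA2, hA4, hA1, hA3⟩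


lemma structure_thm (hn : 2 ≤ n) (heven : Even n) (hcard : Fintype.card V = n)
    (hH : ∀ M : Finset (Sym2 V), IsMaximalMatching G M → n / 2 ≤ M.card)
    (hconn : G.Connected) :
    (∀ w z : V, w ≠ z → G.Adj w z) ∨
    (∃ P : V → Prop, (∀ w z : V, G.Adj w z ↔ (P w ↔ ¬ P z)) ∧
      (univ.filter P).card = n / 2 ∧ (univ.filter (fun v => ¬ P v)).card = n / 2) := by
  obtain ⟨M, hMmax, -⟩ := exists_maximal_superset (G := G) (M₀ := ∅)
    ⟨by simp, by simp⟩
  have hP : IsPerfect G M := perfect_of_maximal heven hcard hH hMmax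
  have hM := hP.1
  by_cases hD : ∃ e ∈ M, ∃ f ∈ M, e ≠ f ∧ Dbl G e f
  · -- complete case
    left
    obtain ⟨e, he, f, hf, hef, hDef⟩ := hD
    have step : ∀ g ∈ M, g ≠ e → Dbl G e g := by
      intro g hg hge
      by_cases hgf : g = f
      · subst hgf; exact hDef
      · exact dbl_spread hn heven hcard hH hconn hP he hf hg hef (Ne.symm hge)
          (fun h => hgf h.symm) hDef
    have dbl_any : ∀ g ∈ M, ∀ h ∈ M, g ≠ h → Dbl G g h := by
      intro g hg h hh hgh
      by_cases hge : g = e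
      · subst hge; exact step h hh (Ne.symm hgh)
      · by_cases hhe : h = e
        · subst hhe; exact dbl_symm (step g hg hge)
        · exact dbl_spread hn heven hcard hH hconn hP hg he hh hge hgh
            (Ne.symm hhe) (dbl_symm (step g hg hge))
    intro w z hwz
    obtain ⟨ew, hew, hwew⟩ := hP.2 w
    obtain ⟨ez, hez, hzez⟩ := hP.2 z
    by_cases h : ew = ez
    · subst h
      obtain ⟨r, s', hrs, hreq⟩ := edge_rep (hM.1 hew)
      subst hreq
      rcases Sym2.mem_iff.1 hwew with h1 | h1 <;> rcases Sym2.mem_iff.1 hzez with h2 | h2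
      · exact absurd (h1.trans h2.symm) hwz
      · rw [h1, h2]; exact hrs
      · rw [h1, h2]; exact hrs.symm
      · exact absurd (h1.trans h2.symm) hwz
    · obtain ⟨a, b, c, d, heq1, heq2, h1, h2, h3, h4⟩ := dbl_any ew hew ez hez h
      rw [heq1] at hwew
      rw [heq2] at hzez
      rcases Sym2.mem_iff.1 hwew with hw | hw <;> rcases Sym2.mem_iff.1 hzez with hz | hz
      · rw [hw, hz]; exact h1
      · rw [hw, hz]; exact h2
      · rw [hw, hz]; exact h3
      · rw [hw, hz]; exact h4
  · -- bipartite case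
    right
    push_neg at hD
    have hVne : Nonempty V := by
      rw [← Fintype.card_pos_iff, hcard]; omega
    obtain ⟨v0⟩ := hVne
    obtain ⟨e0, he0, hv0⟩ := hP.2 v0
    obtain ⟨x0, y0, hxy0, he0eq⟩ := edge_rep (hM.1 he0)
    subst he0eq
    set P : V → Prop := fun w => w = x0 ∨ G.Adj w y0 with hPdef
    have hx0y0 : x0 ≠ y0 := hxy0.ne
    have hPx0 : P x0 := Or.inl rfl
    have hPy0 : ¬ P y0 := by
      rintro (h | h)
      · exact hx0y0 h.symm
      · exact G.irrefl h
    have hPoff : ∀ w : V, w ≠ x0 → (P w ↔ G.Adj w y0) := by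
      intro w hw; simp [hPdef, hw]
    -- partner structure for vertices off the base edge
    have hoff : ∀ w : V, w ≠ x0 → w ≠ y0 → ∃ w2 : V,
        s(w, w2) ∈ M ∧ w2 ≠ x0 ∧ w2 ≠ y0 ∧ w ≠ w2 ∧ s(w, w2) ≠ s(x0, y0) ∧
        ((G.Adj w y0 ∧ G.Adj w2 x0 ∧ ¬ G.Adj w x0 ∧ ¬ G.Adj w2 y0) ∨
         (G.Adj w x0 ∧ G.Adj w2 y0 ∧ ¬ G.Adj w y0 ∧ ¬ G.Adj w2 x0)) := by
      intro w hwx hwy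
      obtain ⟨f, hfM, hwf⟩ := hP.2 w
      have hfeq := Sym2.other_spec hwf
      set w2 := Sym2.Mem.other hwf with hw2def
      rw [← hfeq] at hfM
      have hwne : w ≠ w2 := fun h =>
        G.not_isDiag_of_mem_edgeSet (hM.1 hfM) (by rw [Sym2.mk_isDiag_iff]; exact h)
      have hfe0 : s(w, w2) ≠ s(x0, y0) := by
        intro h
        have : w ∈ s(x0, y0) := by rw [← h]; exact Sym2.mem_mk_left _ _
        rcases Sym2.mem_iff.1 this with h' | h'
        · exact hwx h'
        · exact hwy h'
      have hdisj : ∀ z, z ∈ s(w, w2) → z ∉ s(x0, y0) :=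
        fun z => hM.2 _ hfM _ he0 hfe0 z
      have hw2x : w2 ≠ x0 := fun h =>
        hdisj w2 (Sym2.mem_mk_right _ _) (h ▸ Sym2.mem_mk_left x0 y0)
      have hw2y : w2 ≠ y0 := fun h =>
        hdisj w2 (Sym2.mem_mk_right _ _) (h ▸ Sym2.mem_mk_right x0 y0)
      have hnotboth : ∀ a b : V, s(a, b) ∈ M → s(a, b) ≠ s(x0, y0) →
          G.Adj a x0 → G.Adj a y0 → False := by
        intro a b hab habne hax hay
        exact hD _ hab _ he0 habne
          (dbl_of_two hn heven hcard hH hP hab he0 habne hax hay)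
      rcases pairs hn heven hcard hH hconn hP he0 hfM (Ne.symm hfe0) with
        ⟨hA, hB⟩ | ⟨hA, hB⟩
      · -- Adj x0 w, Adj y0 w2
        refine ⟨w2, hfM, hw2x, hw2y, hwne, hfe0, Or.inr ⟨hA.symm, hB.symm, ?_, ?_⟩⟩
        · intro h
          exact hnotboth w w2 hfM hfe0 hA.symm h
        · intro h
          exact hnotboth w2 w (mem_swap hfM) (ne_swap_l hfe0) h hB.symm
      · -- Adj x0 w2, Adj y0 w
        refine ⟨w2, hfM, hw2x, hw2y, hwne, hfe0, Or.inl ⟨hB.symm, hA.symm, ?_, ?_⟩⟩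
        · intro h
          exact hnotboth w w2 hfM hfe0 h hB.symm
        · intro h
          exact hnotboth w2 w (mem_swap hfM) (ne_swap_l hfe0) hA.symm h
    have hadj_iff : ∀ w z : V, G.Adj w z ↔ (P w ↔ ¬ P z) := by
      intro w z
      by_cases hwz : w = z
      · subst hwz
        constructor
        · intro h; exact absurd h (G.irrefl)
        · intro h; exact absurd h (iff_not_self)
      by_cases hw1 : w = x0
      · rw [hw1]
        by_cases hz1 : z = y0
        · rw [hz1]
          constructor
          · intro _; tauto
          · intro _; exact hxy0
        · have hz2 : z ≠ x0 := fun h => hwz (hw1.trans h.symm)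
          obtain ⟨z2, hz2M, _, _, _, hze0, hzcase⟩ := hoff z hz2 hz1
          have hPz : P z ↔ G.Adj z y0 := hPoff z hz2
          rcases hzcase with ⟨hA, hB, hC, hE⟩ | ⟨hA, hB, hC, hE⟩
          · constructor
            · intro h; exact absurd h.symm hC
            · intro h
              exfalso
              rw [eq_true hPx0, true_iff, hPz] at h
              exact h hA
          · constructor
            · intro _
              rw [eq_true hPx0, true_iff, hPz]
              exact hC
            · intro _; exact hA.symm
      by_cases hw2 : w = y0
      · rw [hw2]
        by_cases hz1 : z = x0
        · rw [hz1]
          constructor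
          · intro _; tauto
          · intro _; exact hxy0.symm
        · obtain ⟨z2, hz2M, _, _, _, hze0, hzcase⟩ :=
            hoff z hz1 (fun h => hwz (hw2.trans h.symm))
          have hPz : P z ↔ G.Adj z y0 := hPoff z hz1
          constructor
          · intro h
            rw [eq_false hPy0, false_iff, not_not, hPz]
            exact h.symm
          · intro h
            rw [eq_false hPy0, false_iff, not_not, hPz] at h
            exact h.symm
      -- now w is off the base edge
      obtain ⟨w2, hw2M, hw2x, hw2y, hww2, hwe0, hwcase⟩ := hoff w hw1 hw2
      have hPw : P w ↔ G.Adj w y0 := hPoff w hw1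
      have hxorw : G.Adj w x0 ↔ ¬ G.Adj w y0 := by
        rcases hwcase with ⟨hA, hB, hC, hE⟩ | ⟨hA, hB, hC, hE⟩
        · simp [hC, hA]
        · simp [hA, hC]
      by_cases hz1 : z = x0
      · rw [hz1]
        have hrw : (P w ↔ ¬ P x0) ↔ ¬ P w := by tauto
        rw [hrw, hPw, ← hxorw]
      by_cases hz2 : z = y0
      · rw [hz2]
        have hrw : (P w ↔ ¬ P y0) ↔ P w := by tauto
        rw [hrw, hPw]
      obtain ⟨z2, hz2M, hz2x, hz2y, hzz2, hze0, hzcase⟩ := hoff z hz1 hz2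
      have hPz : P z ↔ G.Adj z y0 := hPoff z hz1
      by_cases hzw2 : z = w2
      · -- z is the partner of w
        have hadj : G.Adj w z := by
          rw [hzw2]
          exact G.mem_edgeSet.1 (hM.1 hw2M)
        have hrhs : P w ↔ ¬ P z := by
          rw [hPw, hPz, hzw2]
          rcases hwcase with ⟨hA, hB, hC, hE⟩ | ⟨hA, hB, hC, hE⟩
          · simp [hA, hE]
          · simp [hC, hB]
        exact iff_of_true hadj hrhs
      · -- distinct matching edges
        have hfg : s(w, w2) ≠ s(z, z2) := by
          intro h
          have : z ∈ s(w, w2) := by rw [h]; exact Sym2.mem_mk_left _ _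
          rcases Sym2.mem_iff.1 this with h' | h'
          · exact hwz h'.symm
          · exact hzw2 h'
        constructor
        · intro hadjwz
          rw [hPw, hPz]
          rcases hwcase with ⟨hwA, hwB, hwC, hwE⟩ | ⟨hwA, hwB, hwC, hwE⟩ <;>
            rcases hzcase with ⟨hzA, hzB, hzC, hzE⟩ | ⟨hzA, hzB, hzC, hzE⟩
          · exfalso
            have := triple_swap hn heven hcard hH hP he0 (mem_swap hw2M) hz2M
              (ne_swap_r (Ne.symm hwe0)) (Ne.symm hze0) (ne_swap_l hfg) hwB.symm hadjwz
            exact hzE this.symm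
          · simp [hwA, hzC]
          · simp [hwC, hzA]
          · exfalso
            have := triple_swap hn heven hcard hH hP (mem_swap he0) (mem_swap hw2M) hz2M
              (ne_swap_l (ne_swap_r (Ne.symm hwe0))) (ne_swap_l (Ne.symm hze0))
              (ne_swap_l hfg) hwB.symm hadjwz
            exact hzE this.symm
        · intro hxor
          rw [hPw, hPz] at hxor
          rcases hwcase with ⟨hwA, hwB, hwC, hwE⟩ | ⟨hwA, hwB, hwC, hwE⟩ <;>
            rcases hzcase with ⟨hzA, hzB, hzC, hzE⟩ | ⟨hzA, hzB, hzC, hzE⟩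
          · exact absurd hzA (hxor.1 hwA)
          · rcases pairs hn heven hcard hH hconn hP hw2M hz2M hfg with ⟨h5, h6⟩ | ⟨h5, h6⟩
            · exact h5
            · exfalso
              have := triple_swap hn heven hcard hH hP he0 (mem_swap hw2M) (mem_swap hz2M)
                (ne_swap_r (Ne.symm hwe0)) (ne_swap_r (Ne.symm hze0))
                (ne_swap_r (ne_swap_l hfg)) hwB.symm h5
              exact hzC this.symm
          · rcases pairs hn heven hcard hH hconn hP hw2M hz2M hfg with ⟨h5, h6⟩ | ⟨h5, h6⟩
            · exact h5
            · exfalso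
              have := triple_swap hn heven hcard hH hP he0 hw2M hz2M
                (Ne.symm hwe0) (Ne.symm hze0) hfg hwA.symm h6
              exact hzE this.symm
          · exact absurd (hxor.2 hzC) hwC
    -- cardinality of the two sides
    have hothers : ∀ v : V, ∃ u : V, s(v, u) ∈ M ∧ v ≠ u := by
      intro v
      obtain ⟨f, hf, hvf⟩ := hP.2 v
      have hfeq := Sym2.other_spec hvf
      have hf2 : s(v, Sym2.Mem.other hvf) ∈ M := by rw [hfeq]; exact hf
      refine ⟨Sym2.Mem.other hvf, hf2, fun h => ?_⟩
      exact G.not_isDiag_of_mem_edgeSet (hM.1 hf2)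
        (by rw [Sym2.mk_isDiag_iff]; exact h)
    choose σ hσM hσne using hothers
    have hflip : ∀ v : V, (P v ↔ ¬ P (σ v)) :=
      fun v => (hadj_iff v (σ v)).1 (G.mem_edgeSet.1 (hM.1 (hσM v)))
    have hinv : ∀ v : V, σ (σ v) = v := by
      intro v
      have h1 : s(σ v, σ (σ v)) ∈ M := hσM (σ v)
      have h2 : s(σ v, v) ∈ M := mem_swap (hσM v)
      have heq := mem_edge_unique hM h1 h2 (Sym2.mem_mk_left _ _) (Sym2.mem_mk_left _ _)
      have h3 : σ (σ v) ∈ s(σ v, v) := by rw [← heq]; exact Sym2.mem_mk_right _ _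
      rcases Sym2.mem_iff.1 h3 with h | h
      · exact absurd h.symm (hσne (σ v))
      · exact h
    have hcards : (univ.filter P).card = (univ.filter (fun v => ¬ P v)).card := by
      apply Finset.card_nbij σ
      · intro a ha
        simp only [Finset.mem_coe, Finset.mem_filter, Finset.mem_univ, true_and] at ha ⊢
        exact (hflip a).1 ha
      · intro a _ b _ hab
        have := congrArg σ hab
        rwa [hinv, hinv] at this
      · intro b hb
        simp only [Finset.coe_filter, Set.mem_setOf_eq, Finset.mem_univ, true_and] at hb
        refine ⟨σ b, ?_, hinv b⟩
        simp only [Finset.coe_filter, Set.mem_setOf_eq, Finset.mem_univ, true_and]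
        have := hflip (σ b)
        rw [hinv b] at this
        exact this.2 hb
    have hsum : (univ.filter P).card + (univ.filter (fun v => ¬ P v)).card = n := by
      rw [Finset.card_filter_add_card_filter_not, Finset.card_univ, hcard]
    obtain ⟨k, hk⟩ := heven
    have hfin1 : (univ.filter P).card = n / 2 := by omega
    have hfin2 : (univ.filter (fun v => ¬ P v)).card = n / 2 := by omega
    refine ⟨P, hadj_iff, ?_, ?_⟩
    · convert hfin1 using 3
    · convert hfin2 using 3


lemma induced_card_le_one (hn : 2 ≤ n) (heven : Even n) (hcard : Fintype.card V = n)
    (hH : ∀ M : Finset (Sym2 V), IsMaximalMatching G M → n / 2 ≤ M.card)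
    (hconn : G.Connected) {N : Finset (Sym2 V)} (hN : IsInducedMatching G N) :
    N.card ≤ 1 := by
  by_contra h
  push_neg at h
  obtain ⟨e, he, f, hf, hef⟩ := Finset.one_lt_card.1 h
  have hsub : ({e, f} : Finset (Sym2 V)) ⊆ N := by
    intro g hg
    rcases Finset.mem_insert.1 hg with rfl | hg
    · exact he
    · exact (Finset.mem_singleton.1 hg) ▸ hf
  have hmatch : IsMatching G {e, f} := hN.1.subset' hsub
  obtain ⟨M, hMmax, hsubM⟩ := exists_maximal_superset hmatch
  have hP := perfect_of_maximal heven hcard hH hMmax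
  obtain ⟨a, b, ha, hb, hab⟩ := all_sim hn heven hcard hH hconn hP
    (hsubM (Finset.mem_insert_self _ _))
    (hsubM (Finset.mem_insert_of_mem (Finset.mem_singleton_self _))) hef
  exact hN.2 e he f hf hef s(a,b) (G.mem_edgeSet.2 hab)
    ⟨a, Sym2.mem_mk_left _ _, ha⟩ ⟨b, Sym2.mem_mk_right _ _, hb⟩

lemma exists_adj (hn : 2 ≤ n) (hcard : Fintype.card V = n) (hconn : G.Connected) :
    ∃ a b : V, G.Adj a b := by
  have : 1 < Fintype.card V := by omega
  obtain ⟨a, b, hab⟩ := Fintype.exists_pair_of_one_lt_card this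
  obtain ⟨w⟩ := hconn.preconnected a b
  cases w with
  | nil => exact absurd rfl hab
  | cons hadj _ => exact ⟨_, _, hadj⟩

lemma indMatchNum_eq_one (hn : 2 ≤ n) (heven : Even n) (hcard : Fintype.card V = n)
    (hH : ∀ M : Finset (Sym2 V), IsMaximalMatching G M → n / 2 ≤ M.card)
    (hconn : G.Connected) : indMatchNum G = 1 := by
  obtain ⟨a, b, hab⟩ := exists_adj hn hcard hconn
  have h1 : 1 ∈ {k : ℕ | ∃ N : Finset (Sym2 V), IsInducedMatching G N ∧ N.card = k} := by
    refine ⟨{s(a,b)}, ⟨⟨?_, ?_⟩, ?_⟩, Finset.card_singleton _⟩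
    · intro e he
      have : e = s(a,b) := Finset.mem_singleton.1 (by exact_mod_cast he)
      exact this ▸ G.mem_edgeSet.2 hab
    · intro e he f hf hef
      exact absurd ((Finset.mem_singleton.1 he).trans (Finset.mem_singleton.1 hf).symm) hef
    · intro e he f hf hef
      exact absurd ((Finset.mem_singleton.1 he).trans (Finset.mem_singleton.1 hf).symm) hef
  have hub : ∀ k ∈ {k : ℕ | ∃ N : Finset (Sym2 V), IsInducedMatching G N ∧ N.card = k},
      k ≤ 1 := by
    rintro k ⟨N, hN, rfl⟩
    exact induced_card_le_one hn heven hcard hH hconn hN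
  exact le_antisymm (csSup_le ⟨1, h1⟩ hub) (le_csSup ⟨1, fun k hk => hub k hk⟩ h1)

lemma minMatch_bound {n : ℕ} (hmin : minMatchNum G = n / 2) :
    ∀ M : Finset (Sym2 V), IsMaximalMatching G M → n / 2 ≤ M.card := by
  intro M hM
  rw [← hmin]
  exact Nat.sInf_le ⟨M, hM, rfl⟩


theorem minMatchNum_eq_half_card {V : Type*} [Fintype V] (n : ℕ) (hn : 2 ≤ n)
    (heven : Even n) (G : SimpleGraph V) (hcard : Fintype.card V = n)
    (hconn : G.Connected) (hmin : minMatchNum G = n / 2) :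
    (Nonempty (G ≃g (⊤ : SimpleGraph V)) ∨
        Nonempty (G ≃g completeBipartiteGraph (Fin (n / 2)) (Fin (n / 2)))) ∧
      indMatchNum G = 1 ∧
      ∀ (W : Type) [Fintype W] (H : SimpleGraph W), H.Connected → Fintype.card W = n →
        ∀ p : ℕ, 2 ≤ p →
          ¬ (indMatchNum H = p ∧ minMatchNum H = n / 2 ∧ matchNum H = n / 2) := by
  have hH := minMatch_bound (G := G) hmin
  refine ⟨?_, indMatchNum_eq_one hn heven hcard hH hconn, ?_⟩
  · rcases structure_thm hn heven hcard hH hconn with hC | ⟨P, hiff, hc1, hc2⟩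
    · left
      refine ⟨⟨Equiv.refl V, ?_⟩⟩
      intro a b
      simp only [Equiv.refl_apply, SimpleGraph.top_adj]
      constructor
      · exact hC a b
      · exact fun h => h.ne
    · right
      classical
      have hcL : Fintype.card {w // P w} = n / 2 := by
        rw [Fintype.card_subtype]
        convert hc1 using 3
      have hcR : Fintype.card {w // ¬ P w} = n / 2 := by
        rw [Fintype.card_subtype]
        convert hc2 using 3
      refine ⟨⟨(Equiv.sumCompl P).symm.trans
        (Equiv.sumCongr (Fintype.equivFinOfCardEq hcL) (Fintype.equivFinOfCardEq hcR)), ?_⟩⟩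
      intro a b
      simp only [Equiv.trans_apply]
      rw [hiff a b]
      by_cases hpa : P a <;> by_cases hpb : P b
      · rw [Equiv.sumCompl_symm_apply_of_pos hpa, Equiv.sumCompl_symm_apply_of_pos hpb]
        simp [completeBipartiteGraph_adj, hpa, hpb]
      · rw [Equiv.sumCompl_symm_apply_of_pos hpa, Equiv.sumCompl_symm_apply_of_neg hpb]
        simp [completeBipartiteGraph_adj, hpa, hpb]
      · rw [Equiv.sumCompl_symm_apply_of_neg hpa, Equiv.sumCompl_symm_apply_of_pos hpb]
        simp [completeBipartiteGraph_adj, hpa, hpb]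
      · rw [Equiv.sumCompl_symm_apply_of_neg hpa, Equiv.sumCompl_symm_apply_of_neg hpb]
        simp [completeBipartiteGraph_adj, hpa, hpb]
  · intro W _ H hHconn hWcard p hp
    rintro ⟨hip, hmp, -⟩
    have hH' := minMatch_bound (G := H) hmp
    have := indMatchNum_eq_one hn heven hWcard hH' hHconn
    omega


end Half
end Proofs

end MatchingPaper
end

section
/- Let G be a finite simple graph and v ∈ V(G). Then min-match(G∖v) ≤ min-match(G), where G∖v is the induced subgraph of G on V(G)∖{v}. -/
namespace MatchingPaper

variable {V : Type*}

section Aux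
open Classical

variable {v : V}

private lemma aux_phi_inj {v : V} :
    Function.Injective (Sym2.map (Subtype.val : ↥({v}ᶜ : Set V) → V)) :=
  Sym2.map.injective Subtype.val_injective

private lemma aux_edge_iff (G : SimpleGraph V) (s : Set V) (e : Sym2 ↥s) :
    e ∈ (G.induce s).edgeSet ↔ Sym2.map Subtype.val e ∈ G.edgeSet := by
  induction e using Sym2.ind with
  | _ a b => simp [SimpleGraph.mem_edgeSet]

private lemma aux_v_notin (e : Sym2 ↥({v}ᶜ : Set V)) : v ∉ Sym2.map Subtype.val e := by
  induction e using Sym2.ind with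
  | _ a b =>
    have ha := a.2; have hb := b.2
    simp only [Set.mem_compl_iff, Set.mem_singleton_iff] at ha hb
    simp only [Sym2.map_pair_eq, Sym2.mem_iff, not_or]
    exact ⟨fun h => ha h.symm, fun h => hb h.symm⟩

private lemma aux_surj_on (s : Sym2 V) (h : v ∉ s) :
    ∃ e : Sym2 ↥({v}ᶜ : Set V), Sym2.map Subtype.val e = s := by
  induction s using Sym2.ind with
  | _ a b =>
    simp only [Sym2.mem_iff, not_or] at h
    exact ⟨s(⟨a, Ne.symm h.1⟩, ⟨b, Ne.symm h.2⟩), by simp⟩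

private lemma aux_mem_phi {x : V} {e : Sym2 ↥({v}ᶜ : Set V)} :
    x ∈ Sym2.map Subtype.val e ↔ ∃ a ∈ e, (a : V) = x := Sym2.mem_map

private noncomputable def pull (v : V) (M : Finset (Sym2 V)) : Finset (Sym2 ↥({v}ᶜ : Set V)) :=
  M.preimage (Sym2.map Subtype.val) aux_phi_inj.injOn

private lemma mem_pull {M : Finset (Sym2 V)} {e : Sym2 ↥({v}ᶜ : Set V)} :
    e ∈ pull v M ↔ Sym2.map Subtype.val e ∈ M := Finset.mem_preimage

private lemma image_pull {M : Finset (Sym2 V)} (hM : ∀ e ∈ M, v ∉ e) :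
    (pull v M).image (Sym2.map Subtype.val) = M := by
  ext s
  simp only [Finset.mem_image]
  constructor
  · rintro ⟨e, he, rfl⟩; exact mem_pull.mp he
  · intro hs
    obtain ⟨e, rfl⟩ := aux_surj_on s (hM s hs)
    exact ⟨e, mem_pull.mpr hs, rfl⟩

private lemma card_pull {M : Finset (Sym2 V)} (hM : ∀ e ∈ M, v ∉ e) :
    (pull v M).card = M.card := by
  conv_rhs => rw [← image_pull hM]
  exact (Finset.card_image_of_injective _ aux_phi_inj).symm

private lemma matching_subset {W : Type*} {G : SimpleGraph W} {M S : Finset (Sym2 W)}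
    (hM : IsMatching G M) (hS : ∀ x ∈ S, x ∈ M) : IsMatching G S :=
  ⟨fun e he => hM.1 (hS e (by exact_mod_cast he)),
    fun e he f hf => hM.2 e (hS e he) f (hS f hf)⟩

private lemma pull_matching {G : SimpleGraph V} {M : Finset (Sym2 V)}
    (hv : ∀ e ∈ M, v ∉ e) (hM : IsMatching G M) :
    IsMatching (G.induce ({v}ᶜ : Set V)) (pull v M) := by
  constructor
  · intro e he
    exact (aux_edge_iff G _ e).mpr (hM.1 (mem_pull.mp (by exact_mod_cast he)))
  · intro e he f hf hef a hae haf
    refine hM.2 _ (mem_pull.mp he) _ (mem_pull.mp hf)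
      (fun h => hef (aux_phi_inj h)) (a : V) ?_ ?_
    · exact aux_mem_phi.mpr ⟨a, hae, rfl⟩
    · exact aux_mem_phi.mpr ⟨a, haf, rfl⟩

/-- membership-based "insert a matching edge" lemma, avoiding `insert` instance issues -/
private lemma insert_matching' {W : Type*} {G : SimpleGraph W} {M : Finset (Sym2 W)}
    (hM : IsMatching G M) {e : Sym2 W} (he : e ∈ G.edgeSet)
    (hd : ∀ f ∈ M, ∀ x, x ∈ e → x ∉ f) {K : Finset (Sym2 W)}
    (hK : ∀ x, x ∈ K ↔ x = e ∨ x ∈ M) : IsMatching G K := by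
  constructor
  · intro s hs
    rcases (hK s).mp (by exact_mod_cast hs) with rfl | hs
    · exact he
    · exact hM.1 hs
  · intro a ha b hb hab x hxa hxb
    rcases (hK a).mp ha with ha' | ha' <;> rcases (hK b).mp hb with hb' | hb'
    · exact hab (ha'.trans hb'.symm)
    · exact hd b hb' x (ha' ▸ hxa) hxb
    · exact (hd a ha' x (hb' ▸ hxb)) hxa
    · exact hM.2 a ha' b hb' hab x hxa hxb

private lemma exists_maximal [Fintype V] (G : SimpleGraph V) :
    ∃ M, IsMaximalMatching G M := by
  classical
  set S : Set ℕ := {n : ℕ | ∃ M : Finset (Sym2 V), IsMatching G M ∧ M.card = n} with hS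
  have h0 : 0 ∈ S := ⟨∅, ⟨by simp, by simp⟩, by simp⟩
  have hbdd : BddAbove S := by
    refine ⟨Fintype.card (Sym2 V), ?_⟩
    rintro n ⟨M, _, rfl⟩
    exact Finset.card_le_univ M
  obtain ⟨M, hM, hcard⟩ := Nat.sSup_mem ⟨0, h0⟩ hbdd
  refine ⟨M, hM, ?_⟩
  intro e he heM hins
  have hmem : M.card + 1 ∈ S := ⟨insert e M, hins, by rw [Finset.card_insert_of_notMem heM]⟩
  have := le_csSup hbdd hmem
  omega

private lemma main_construction [Fintype V] (G : SimpleGraph V) (v : V)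
    {M : Finset (Sym2 V)} (hM : IsMaximalMatching G M) :
    ∃ M' : Finset (Sym2 ↥({v}ᶜ : Set V)),
      IsMaximalMatching (G.induce ({v}ᶜ : Set V)) M' ∧ M'.card ≤ M.card := by
  by_cases hv : ∃ e0 ∈ M, v ∈ e0
  · -- v is covered by some edge e0 = s(v, w) of M
    obtain ⟨e0, he0M, hve0⟩ := hv
    obtain ⟨w, rfl⟩ := Sym2.mem_iff_exists.mp hve0
    have hadj : G.Adj v w := hM.1.1 he0M
    have hwv : w ≠ v := fun h => G.irrefl (h ▸ hadj)
    set w' : ↥({v}ᶜ : Set V) := ⟨w, hwv⟩ with hw'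
    set N : Finset (Sym2 V) := M.erase s(v, w) with hN
    have hNsub : ∀ x ∈ N, x ∈ M := fun x hx => Finset.mem_of_mem_erase hx
    have hNv : ∀ e ∈ N, v ∉ e := fun e he =>
      hM.1.2 _ he0M e (Finset.mem_of_mem_erase he) (Finset.ne_of_mem_erase he).symm v hve0
    have hNw : ∀ e ∈ N, w ∉ e := fun e he =>
      hM.1.2 _ he0M e (Finset.mem_of_mem_erase he) (Finset.ne_of_mem_erase he).symm w
        (Sym2.mem_mk_right v w)
    have hNmatch : IsMatching (G.induce ({v}ᶜ : Set V)) (pull v N) :=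
      pull_matching hNv (matching_subset hM.1 hNsub)
    have hMcard : 1 ≤ M.card := Finset.card_pos.mpr ⟨_, he0M⟩
    have hcardN : (pull v N).card = M.card - 1 := by
      rw [card_pull hNv, hN, Finset.card_erase_of_mem he0M]
    -- key: an edge h of G∖v, not in pull v N, disjoint from pull v N and avoiding w',
    -- would contradict maximality of M
    have key : ∀ h : Sym2 ↥({v}ᶜ : Set V), h ∈ (G.induce ({v}ᶜ : Set V)).edgeSet →
        h ∉ pull v N → (∀ f ∈ pull v N, ∀ x, x ∈ h → x ∉ f) → w' ∉ h → False := by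
      intro h hhE hhN hdisj hwh
      set φh := Sym2.map Subtype.val h with hφh
      have hφhE : φh ∈ G.edgeSet := (aux_edge_iff G _ h).mp hhE
      have hwφh : w ∉ φh := by
        intro hmem
        obtain ⟨a, ha, hav⟩ := aux_mem_phi.mp hmem
        exact hwh (by rwa [show w' = a from Subtype.ext hav.symm])
      have hvφh : v ∉ φh := aux_v_notin h
      have hφhe0 : φh ≠ s(v, w) := fun hc => hvφh (hc ▸ Sym2.mem_mk_left v w)
      have hφhM : φh ∉ M := by
        intro hc
        exact hhN (mem_pull.mpr (Finset.mem_erase_of_ne_of_mem hφhe0 hc))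
      refine hM.2 φh hφhE hφhM ?_
      refine insert_matching' hM.1 hφhE ?_ (fun x => Finset.mem_insert)
      intro f hf x hxφ
      obtain ⟨a, hah, rfl⟩ := aux_mem_phi.mp hxφ
      by_cases hfe0 : f = s(v, w)
      · subst hfe0
        intro hc
        rcases Sym2.mem_iff.mp hc with hc' | hc'
        · exact hvφh (hc' ▸ hxφ)
        · exact hwφh (hc' ▸ hxφ)
      · have hfN : f ∈ N := Finset.mem_erase_of_ne_of_mem hfe0 hf
        obtain ⟨f', rfl⟩ := aux_surj_on f (hNv f hfN)
        intro hc
        obtain ⟨b, hbf, hba⟩ := aux_mem_phi.mp hc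
        have : b = a := Subtype.val_injective hba
        subst this
        exact hdisj f' (mem_pull.mpr hfN) b hah hbf
    by_cases hg : ∃ g : Sym2 ↥({v}ᶜ : Set V), g ∈ (G.induce ({v}ᶜ : Set V)).edgeSet ∧
        w' ∈ g ∧ g ∉ pull v N ∧ (∀ f ∈ pull v N, ∀ x, x ∈ g → x ∉ f)
    · obtain ⟨g, hgE, hwg, hgN, hgdisj⟩ := hg
      refine ⟨insert g (pull v N), ⟨?_, ?_⟩, ?_⟩
      · exact insert_matching' hNmatch hgE hgdisj (fun x => Finset.mem_insert)
      · intro h hhE hhM' hins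
        have hhg : h ≠ g := fun hc => hhM' (hc ▸ Finset.mem_insert_self g (pull v N))
        have hhpN : h ∉ pull v N := fun hc =>
          hhM' (Finset.mem_insert_of_mem hc)
        have hwh : w' ∉ h := fun hwh =>
          hins.2 h (by simp) g (by simp) hhg w' hwh hwg
        refine key h hhE hhpN ?_ hwh
        intro f hf x hxh
        exact hins.2 h (by simp) f (by simp [hf])
          (fun hc => hhpN (by rw [hc]; exact hf)) x hxh
      · calc (insert g (pull v N)).card ≤ (pull v N).card + 1 := Finset.card_insert_le _ _
          _ ≤ M.card := by omega
    · refine ⟨pull v N, ⟨hNmatch, ?_⟩, by omega⟩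
      intro h hhE hhN hins
      have hdisj : ∀ f ∈ pull v N, ∀ x, x ∈ h → x ∉ f := by
        intro f hf x hxh
        exact hins.2 h (by simp) f (by simp [hf])
          (fun hc => hhN (by rw [hc]; exact hf)) x hxh
      by_cases hwh : w' ∈ h
      · exact hg ⟨h, hhE, hwh, hhN, hdisj⟩
      · exact key h hhE hhN hdisj hwh
  · push_neg at hv
    refine ⟨pull v M, ⟨pull_matching hv hM.1, ?_⟩, le_of_eq (card_pull hv)⟩
    intro h hhE hhM hins
    set φh := Sym2.map Subtype.val h with hφh
    have hφhE : φh ∈ G.edgeSet := (aux_edge_iff G _ h).mp hhE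
    have hφhM : φh ∉ M := fun hc => hhM (mem_pull.mpr hc)
    refine hM.2 φh hφhE hφhM ?_
    refine insert_matching' hM.1 hφhE ?_ (fun x => Finset.mem_insert)
    intro f hf x hxφ
    obtain ⟨a, hah, rfl⟩ := aux_mem_phi.mp hxφ
    obtain ⟨f', rfl⟩ := aux_surj_on f (hv f hf)
    intro hc
    obtain ⟨b, hbf, hba⟩ := aux_mem_phi.mp hc
    have : b = a := Subtype.val_injective hba
    subst this
    exact hins.2 h (by simp) f' (by simp [mem_pull.mpr hf])
      (fun hc => hhM (by rw [hc]; exact mem_pull.mpr hf)) b hah hbf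

end Aux

theorem minMatchNum_deleteVertex_le {V : Type*} [Fintype V] (G : SimpleGraph V) (v : V) :
    minMatchNum (G.induce ({v}ᶜ : Set V)) ≤ minMatchNum G := by
  classical
  obtain ⟨M0, hM0⟩ := exists_maximal G
  have hne : {n : ℕ | ∃ M : Finset (Sym2 V), IsMaximalMatching G M ∧ M.card = n}.Nonempty :=
    ⟨M0.card, M0, hM0, rfl⟩
  obtain ⟨M, hMmax, hMc⟩ := Nat.sInf_mem hne
  obtain ⟨M', hM', hc⟩ := main_construction G v hMmax
  have h1 : minMatchNum (G.induce ({v}ᶜ : Set V)) ≤ M'.card :=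
    Nat.sInf_le ⟨M', hM', rfl⟩
  calc minMatchNum (G.induce ({v}ᶜ : Set V)) ≤ M'.card := h1
    _ ≤ M.card := hc
    _ = minMatchNum G := hMc

end MatchingPaper
end

section
/- Let G be a finite simple graph containing two edges {u,w}, {v,w} ∈ E(G) with deg(u) = deg(v) = 1. Then ind-match(G∖v) = ind-match(G), where G∖v is the induced subgraph of G on V(G)∖{v}. -/
namespace MatchingPaper

variable {V : Type*}

/-- helper: an edge containing `x` has the form `s(x,y)` with `G.Adj x y`. -/
lemma edge_through (G : SimpleGraph V) (x : V) :
    ∀ e ∈ G.edgeSet, x ∈ e → ∃ y, G.Adj x y ∧ e = s(x, y) := by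
  intro e
  induction e using Sym2.ind with
  | _ a b =>
    intro he hx
    rw [Sym2.mem_iff] at hx
    rcases hx with rfl | rfl
    · exact ⟨b, he, rfl⟩
    · exact ⟨a, ((G.mem_edgeSet).mp he).symm, Sym2.eq_swap⟩

/-- helper: edges of the induced graph map to edges of `G`. -/
lemma induce_edge_iff (G : SimpleGraph V) (s : Set V) :
    ∀ e : Sym2 s, e ∈ (G.induce s).edgeSet ↔ Sym2.map Subtype.val e ∈ G.edgeSet := by
  intro e
  induction e using Sym2.ind with
  | _ a b => simp only [Sym2.map_pair_eq, SimpleGraph.mem_edgeSet]; exact Iff.rfl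

lemma roundtrip {v : V} (φ : V → ({v}ᶜ : Set V)) (hφ : ∀ x (h : x ≠ v), φ x = ⟨x, h⟩) :
    ∀ e : Sym2 V, v ∉ e → Sym2.map Subtype.val (Sym2.map φ e) = e := by
  intro e
  induction e using Sym2.ind with
  | _ a b =>
    intro hv
    rw [Sym2.mem_iff] at hv
    push_neg at hv
    rw [Sym2.map_pair_eq, Sym2.map_pair_eq, hφ a (Ne.symm hv.1), hφ b (Ne.symm hv.2)]

/-- lifting an induced matching of `G.induce {v}ᶜ` to `G`. -/
lemma lift_dir (G : SimpleGraph V) (v : V) {n : ℕ}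
    (h : ∃ M : Finset (Sym2 ({v}ᶜ : Set V)),
      IsInducedMatching (G.induce ({v}ᶜ : Set V)) M ∧ M.card = n) :
    ∃ N : Finset (Sym2 V), IsInducedMatching G N ∧ N.card = n := by
  classical
  obtain ⟨M, ⟨⟨hsub, hdisj⟩, hind⟩, hcard⟩ := h
  have hinj : Function.Injective (Sym2.map (Subtype.val : ({v}ᶜ : Set V) → V)) :=
    Sym2.map.injective Subtype.val_injective
  refine ⟨M.image (Sym2.map Subtype.val), ⟨⟨?_, ?_⟩, ?_⟩, ?_⟩
  · intro e he
    rw [Finset.mem_coe, Finset.mem_image] at he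
    obtain ⟨e', he', rfl⟩ := he
    exact (induce_edge_iff G _ e').mp (hsub he')
  · intro e he f hf hef x hx hxf
    rw [Finset.mem_image] at he hf
    obtain ⟨e', he', rfl⟩ := he
    obtain ⟨f', hf', rfl⟩ := hf
    obtain ⟨x₁, hx₁, hx₁v⟩ := Sym2.mem_map.mp hx
    obtain ⟨x₂, hx₂, hx₂v⟩ := Sym2.mem_map.mp hxf
    have : x₁ = x₂ := Subtype.ext (hx₁v.trans hx₂v.symm)
    exact hdisj e' he' f' hf' (fun h => hef (by rw [h])) x₁ hx₁ (this ▸ hx₂)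
  · rintro e he f hf hef g hg ⟨a, hag, hae⟩ ⟨b, hbg, hbf⟩
    rw [Finset.mem_image] at he hf
    obtain ⟨e', he', rfl⟩ := he
    obtain ⟨f', hf', rfl⟩ := hf
    have hef' : e' ≠ f' := fun h => hef (by rw [h])
    obtain ⟨a', ha'e, ha'v⟩ := Sym2.mem_map.mp hae
    obtain ⟨b', hb'f, hb'v⟩ := Sym2.mem_map.mp hbf
    have hav : a ≠ v := ha'v ▸ a'.2
    have hbv : b ≠ v := hb'v ▸ b'.2
    obtain ⟨⟨c, d⟩, rfl⟩ := g.exists_rep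
    rw [Sym2.mem_iff] at hag hbg
    by_cases hcv : c = v
    · subst hcv
      have ha : a = d := hag.resolve_left hav
      have hb : b = d := hbg.resolve_left hbv
      have : a' = b' := Subtype.ext (by rw [ha'v, hb'v, ha, hb])
      exact hdisj e' he' f' hf' hef' a' ha'e (this ▸ hb'f)
    · by_cases hdv : d = v
      · subst hdv
        have ha : a = c := hag.resolve_right hav
        have hb : b = c := hbg.resolve_right hbv
        have : a' = b' := Subtype.ext (by rw [ha'v, hb'v, ha, hb])
        exact hdisj e' he' f' hf' hef' a' ha'e (this ▸ hb'f)
      · -- g lifts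
        set g' : Sym2 ({v}ᶜ : Set V) := s(⟨c, hcv⟩, ⟨d, hdv⟩) with hg'
        have hg'mem : g' ∈ (G.induce ({v}ᶜ : Set V)).edgeSet := by
          rw [induce_edge_iff, hg', Sym2.map_pair_eq]
          exact hg
        have ha'g : a' ∈ g' := by
          rw [hg', Sym2.mem_iff]
          rcases hag with h | h
          · exact Or.inl (Subtype.ext (ha'v.trans h))
          · exact Or.inr (Subtype.ext (ha'v.trans h))
        have hb'g : b' ∈ g' := by
          rw [hg', Sym2.mem_iff]
          rcases hbg with h | h
          · exact Or.inl (Subtype.ext (hb'v.trans h))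
          · exact Or.inr (Subtype.ext (hb'v.trans h))
        exact hind e' he' f' hf' hef' g' hg'mem ⟨a', ha'g, ha'e⟩ ⟨b', hb'g, hb'f⟩
  · rw [Finset.card_image_of_injective M hinj, hcard]


lemma adj_eq_of_degree_one [Fintype V] (G : SimpleGraph V) [DecidableRel G.Adj]
    {x w y : V} (hd : G.degree x = 1) (hw : G.Adj x w) (hy : G.Adj x y) : y = w :=
  Finset.card_le_one.mp (le_of_eq hd) y ((G.mem_neighborFinset x y).mpr hy)
    w ((G.mem_neighborFinset x w).mpr hw)

lemma edge_through_deg_one [Fintype V] (G : SimpleGraph V) [DecidableRel G.Adj]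
    {x w : V} (hd : G.degree x = 1) (hw : G.Adj x w) :
    ∀ e ∈ G.edgeSet, x ∈ e → e = s(x, w) := by
  intro e he hx
  obtain ⟨y, hy, rfl⟩ := edge_through G x e he hx
  rw [adj_eq_of_degree_one G hd hw hy]

lemma push_dir [Fintype V] (G : SimpleGraph V) [DecidableRel G.Adj]
    (u v w : V) (huv : u ≠ v) (huw : G.Adj u w) (hvw : G.Adj v w)
    (hdu : G.degree u = 1) (hdv : G.degree v = 1) {n : ℕ}
    (h : ∃ M : Finset (Sym2 V), IsInducedMatching G M ∧ M.card = n) :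
    ∃ M'' : Finset (Sym2 ({v}ᶜ : Set V)),
      IsInducedMatching (G.induce ({v}ᶜ : Set V)) M'' ∧ M''.card = n := by
  classical
  obtain ⟨M, ⟨⟨hsub, hdisj⟩, hind⟩, hcard⟩ := h
  have hvedge : ∀ e ∈ G.edgeSet, v ∈ e → e = s(v, w) := edge_through_deg_one G hdv hvw
  have huedge : ∀ e ∈ G.edgeSet, u ∈ e → e = s(u, w) := edge_through_deg_one G hdu huw
  -- Step 1: an induced matching of `G` of the same size avoiding `v`.
  have key : ∃ M' : Finset (Sym2 V),
      IsInducedMatching G M' ∧ M'.card = n ∧ ∀ e ∈ M', v ∉ e := by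
    by_cases hc : s(v, w) ∈ M
    · have huw_ne : s(u, w) ≠ s(v, w) := by simp [Sym2.eq_iff, huv, huw.ne]
      have huwM : s(u, w) ∉ M := fun hmem =>
        hdisj _ hmem _ hc huw_ne w (by simp) (by simp)
      have hnot : s(u, w) ∉ M.erase s(v, w) := fun h => huwM (Finset.mem_erase.mp h).2
      have djuw : ∀ f ∈ M.erase s(v, w), ∀ x, x ∈ s(u, w) → x ∉ f := by
        intro f hf x hx hxf
        obtain ⟨hfne, hfM⟩ := Finset.mem_erase.mp hf
        rw [Sym2.mem_iff] at hx
        rcases hx with h | h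
        · exact huwM (huedge f (hsub hfM) (h ▸ hxf) ▸ hfM)
        · exact hdisj f hfM s(v, w) hc hfne x hxf (by rw [h]; simp)
      have trans : ∀ g ∈ G.edgeSet, (∃ x, x ∈ g ∧ x ∈ s(u, w)) →
          ∃ x, x ∈ g ∧ x ∈ s(v, w) := by
        rintro g hg ⟨x, hxg, hxu⟩
        rw [Sym2.mem_iff] at hxu
        rcases hxu with h | h
        · exact ⟨w, by rw [huedge g hg (h ▸ hxg)]; simp, by simp⟩
        · exact ⟨x, hxg, by rw [h]; simp⟩
      refine ⟨insert s(u, w) (M.erase s(v, w)), ⟨⟨?_, ?_⟩, ?_⟩, ?_, ?_⟩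
      · intro e he
        rw [Finset.mem_coe, Finset.mem_insert] at he
        rcases he with rfl | he
        · exact huw
        · exact hsub (Finset.mem_erase.mp he).2
      · intro e he f hf hef x hx hxf
        rw [Finset.mem_insert] at he hf
        rcases he with rfl | he <;> rcases hf with rfl | hf
        · exact hef rfl
        · exact djuw f hf x hx hxf
        · exact djuw e he x hxf hx
        · exact hdisj e (Finset.mem_erase.mp he).2 f (Finset.mem_erase.mp hf).2 hef x hx hxf
      · rintro e he f hf hef g hg h1 ⟨b, hbg, hbf⟩
        rw [Finset.mem_insert] at he hf
        rcases he with rfl | he <;> rcases hf with rfl | hf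
        · exact hef rfl
        · exact hind s(v, w) hc f (Finset.mem_erase.mp hf).2
            (Ne.symm (Finset.mem_erase.mp hf).1) g hg (trans g hg h1) ⟨b, hbg, hbf⟩
        · exact hind e (Finset.mem_erase.mp he).2 s(v, w) hc
            (Finset.mem_erase.mp he).1 g hg h1 (trans g hg ⟨b, hbg, hbf⟩)
        · exact hind e (Finset.mem_erase.mp he).2 f (Finset.mem_erase.mp hf).2 hef g hg
            h1 ⟨b, hbg, hbf⟩
      · rw [Finset.card_insert_of_notMem hnot, Finset.card_erase_of_mem hc]
        have hpos : 0 < M.card := Finset.card_pos.mpr ⟨_, hc⟩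
        omega
      · intro e he hv
        rw [Finset.mem_insert] at he
        rcases he with rfl | he
        · rw [Sym2.mem_iff] at hv
          rcases hv with rfl | rfl
          · exact huv rfl
          · exact hvw.ne rfl
        · obtain ⟨hene, heM⟩ := Finset.mem_erase.mp he
          exact hene (hvedge e (hsub heM) hv)
    · refine ⟨M, ⟨⟨hsub, hdisj⟩, hind⟩, hcard, ?_⟩
      intro e he hv
      exact hc (hvedge e (hsub he) hv ▸ he)
  -- Step 2: transfer to the induced subgraph.
  obtain ⟨M', ⟨⟨hsub', hdisj'⟩, hind'⟩, hcard', hvfree⟩ := key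
  have humem : u ∈ ({v}ᶜ : Set V) := by simp [huv]
  set φ : V → ({v}ᶜ : Set V) := fun x => if hx : x = v then ⟨u, humem⟩ else ⟨x, hx⟩ with hφdef
  have hφ : ∀ x (h : x ≠ v), φ x = ⟨x, h⟩ := fun x h => dif_neg h
  have hrt : ∀ e ∈ M', Sym2.map Subtype.val (Sym2.map φ e) = e :=
    fun e he => roundtrip φ hφ e (hvfree e he)
  have hmm : ∀ e ∈ M', ∀ x'' : ({v}ᶜ : Set V), x'' ∈ Sym2.map φ e → ↑x'' ∈ e := by
    intro e he x'' hx
    obtain ⟨a, ha, rfl⟩ := Sym2.mem_map.mp hx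
    have hav : a ≠ v := fun h => hvfree e he (h ▸ ha)
    rw [hφ a hav]
    exact ha
  refine ⟨M'.image (Sym2.map φ), ⟨⟨?_, ?_⟩, ?_⟩, ?_⟩
  · intro e'' he''
    rw [Finset.mem_coe, Finset.mem_image] at he''
    obtain ⟨e, he, rfl⟩ := he''
    rw [induce_edge_iff, hrt e he]
    exact hsub' he
  · intro e'' he'' f'' hf'' hef x'' hx hxf
    rw [Finset.mem_image] at he'' hf''
    obtain ⟨e, he, rfl⟩ := he''
    obtain ⟨f, hf, rfl⟩ := hf''
    have hne : e ≠ f := fun h => hef (by rw [h])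
    exact hdisj' e he f hf hne ↑x'' (hmm e he x'' hx) (hmm f hf x'' hxf)
  · rintro e'' he'' f'' hf'' hef g'' hg'' ⟨a'', ha''g, ha''e⟩ ⟨b'', hb''g, hb''f⟩
    rw [Finset.mem_image] at he'' hf''
    obtain ⟨e, he, rfl⟩ := he''
    obtain ⟨f, hf, rfl⟩ := hf''
    have hne : e ≠ f := fun h => hef (by rw [h])
    have hgmem : Sym2.map Subtype.val g'' ∈ G.edgeSet := (induce_edge_iff G _ g'').mp hg''
    exact hind' e he f hf hne (Sym2.map Subtype.val g'') hgmem
      ⟨↑a'', Sym2.mem_map.mpr ⟨a'', ha''g, rfl⟩, hmm e he a'' ha''e⟩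
      ⟨↑b'', Sym2.mem_map.mpr ⟨b'', hb''g, rfl⟩, hmm f hf b'' hb''f⟩
  · rw [Finset.card_image_of_injOn, hcard']
    intro e he f hf heq
    rw [Finset.mem_coe] at he hf
    have := congrArg (Sym2.map Subtype.val) heq
    rwa [hrt e he, hrt f hf] at this

theorem indMatchNum_delete_twin_leaf {V : Type*} [Fintype V] (G : SimpleGraph V)
    [DecidableRel G.Adj] (u v w : V) (huv : u ≠ v)
    (huw : G.Adj u w) (hvw : G.Adj v w)
    (hdu : G.degree u = 1) (hdv : G.degree v = 1) :
    indMatchNum (G.induce ({v}ᶜ : Set V)) = indMatchNum G := by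
  unfold indMatchNum
  congr 1
  ext n
  exact ⟨fun h => lift_dir G v h, fun h => push_dir G u v w huv huw hvw hdu hdv h⟩

end MatchingPaper
end

section
/- Let a, b, c be integers with a ≥ 1, a ≥ b ≥ 0 and c ≥ 0, and let G = G^{(1)}_{a,b,c} be the graph described below. Then |V(G)| = 2a + 2b + c, ind-match(G) = 1, min-match(G) = a, and match(G) = a + b. -/
namespace MatchingPaper

variable {V : Type*}

/-- The graph `G^{(1)}_{a,b,c}` : a complete graph on `X = {x_1, …, x_{2a}}`
(here `Sum.inl`), pendant edges `{x_i, y_i}` for `1 ≤ i ≤ 2b`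
(`Y` is `Sum.inr ∘ Sum.inl`), and pendant edges `{x_{2a}, z_i}` for `1 ≤ i ≤ c`
(`Z` is `Sum.inr ∘ Sum.inr`). Vertices are 0-indexed, so `x_{2a}` has index `2a - 1`. -/
def G1 (a b c : ℕ) : SimpleGraph (Fin (2 * a) ⊕ Fin (2 * b) ⊕ Fin c) :=
  SimpleGraph.fromRel fun p q =>
    match p, q with
    | Sum.inl i, Sum.inl j => i ≠ j
    | Sum.inl i, Sum.inr (Sum.inl j) => (i : ℕ) = (j : ℕ)
    | Sum.inl i, Sum.inr (Sum.inr _) => (i : ℕ) = 2 * a - 1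
    | _, _ => False

abbrev Vt (a b c : ℕ) := Fin (2*a) ⊕ Fin (2*b) ⊕ Fin c

lemma adj_XX {a b c : ℕ} {i j : Fin (2*a)} (h : i ≠ j) :
    (G1 a b c).Adj (.inl i) (.inl j) := by
  simp [G1, SimpleGraph.fromRel_adj, h]

lemma adj_XY {a b c : ℕ} {i : Fin (2*a)} {j : Fin (2*b)} (h : (i:ℕ) = (j:ℕ)) :
    (G1 a b c).Adj (.inl i) (.inr (.inl j)) := by
  simp [G1, SimpleGraph.fromRel_adj, h]

def xf {a b c : ℕ} (e : Sym2 (Vt a b c)) : Finset (Fin (2*a)) :=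
  Finset.univ.filter (fun i => Sum.inl i ∈ e)

lemma mem_xf {a b c : ℕ} {e : Sym2 (Vt a b c)} {i : Fin (2*a)} :
    i ∈ xf e ↔ Sum.inl i ∈ e := by simp [xf]

lemma xf_XX {a b c : ℕ} {i j : Fin (2*a)} :
    xf (a := a) (b := b) (c := c) s(.inl i, .inl j) = {i, j} := by
  ext k; simp [mem_xf, Sym2.mem_iff]

lemma xf_XY {a b c : ℕ} {i : Fin (2*a)} {j : Fin (2*b)} :
    xf (a := a) (c := c) s(.inl i, .inr (.inl j)) = {i} := by
  ext k; simp [mem_xf, Sym2.mem_iff]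

lemma xf_XZ {a b c : ℕ} {i : Fin (2*a)} {k : Fin c} :
    xf (a := a) (b := b) s(.inl i, .inr (.inr k)) = {i} := by
  ext k; simp [mem_xf, Sym2.mem_iff]
lemma edge_cases' {a b c : ℕ} {e : Sym2 (Vt a b c)}
    (he : e ∈ (G1 a b c).edgeSet) :
    (∃ i j : Fin (2*a), i ≠ j ∧ e = s(.inl i, .inl j)) ∨
    (∃ (i : Fin (2*a)) (j : Fin (2*b)), (i:ℕ) = (j:ℕ) ∧ e = s(.inl i, .inr (.inl j))) ∨
    (∃ (i : Fin (2*a)) (k : Fin c), (i:ℕ) = 2*a - 1 ∧ e = s(.inl i, .inr (.inr k))) := by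
  induction e using Sym2.ind with
  | _ u v =>
    rw [SimpleGraph.mem_edgeSet] at he
    simp only [G1, SimpleGraph.fromRel_adj] at he
    obtain ⟨hne, h⟩ := he
    rcases u with i | j | k <;> rcases v with i' | j' | k' <;>
      simp only [Sum.inl.injEq, Sum.inr.injEq, ne_eq] at hne <;>
      simp only [] at h <;>
      rcases h with h | h <;> try exact h.elim
    all_goals first
      | exact Or.inl ⟨_, _, hne, rfl⟩
      | exact Or.inr (Or.inl ⟨_, _, h, rfl⟩)
      | exact Or.inr (Or.inr ⟨_, _, h, rfl⟩)
      | exact Or.inr (Or.inl ⟨_, _, h, Sym2.eq_swap⟩)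
      | exact Or.inr (Or.inr ⟨_, _, h, Sym2.eq_swap⟩)

lemma mem_X_of_edge {a b c : ℕ} {e : Sym2 (Vt a b c)} (he : e ∈ (G1 a b c).edgeSet) :
    ∃ i : Fin (2*a), Sum.inl i ∈ e := by
  rcases edge_cases' he with ⟨i, j, _, rfl⟩ | ⟨i, j, _, rfl⟩ | ⟨i, k, _, rfl⟩ <;>
    exact ⟨i, by simp⟩

lemma xf_card_le {a b c : ℕ} {e : Sym2 (Vt a b c)} (he : e ∈ (G1 a b c).edgeSet) :
    (xf e).card ≤ 2 := by
  rcases edge_cases' he with ⟨i, j, _, rfl⟩ | ⟨i, j, _, rfl⟩ | ⟨i, k, _, rfl⟩ <;>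
    simp [xf_XX, xf_XY, xf_XZ, Finset.card_insert_le]
  exact Finset.card_insert_le _ _

lemma Z_edge {a b c : ℕ} {e : Sym2 (Vt a b c)} (he : e ∈ (G1 a b c).edgeSet)
    {k : Fin c} (hk : Sum.inr (Sum.inr k) ∈ e) (ha : 1 ≤ a) :
    Sum.inl (⟨2*a-1, by omega⟩ : Fin (2*a)) ∈ e := by
  rcases edge_cases' he with ⟨i, j, _, rfl⟩ | ⟨i, j, _, rfl⟩ | ⟨i, k', hi, rfl⟩ <;>
    simp [Sym2.mem_iff] at hk ⊢
  exact (Fin.ext hi).symm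
lemma sum_xf_le {a b c : ℕ} {M : Finset (Sym2 (Vt a b c))}
    (hM : IsMatching (G1 a b c) M) : ∑ e ∈ M, (xf e).card ≤ 2*a := by
  have hdisj : ∀ e ∈ M, ∀ f ∈ M, e ≠ f → Disjoint (xf e) (xf f) := by
    intro e he f hf hef
    rw [Finset.disjoint_left]
    intro i hie hif
    exact hM.2 e he f hf hef _ (mem_xf.1 hie) (mem_xf.1 hif)
  calc ∑ e ∈ M, (xf e).card = (M.biUnion xf).card := (Finset.card_biUnion hdisj).symm
    _ ≤ (Finset.univ : Finset (Fin (2*a))).card := Finset.card_le_univ _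
    _ = 2*a := by simp

lemma card_xf_pos {a b c : ℕ} {e : Sym2 (Vt a b c)} (he : e ∈ (G1 a b c).edgeSet) :
    1 ≤ (xf e).card := by
  obtain ⟨i, hi⟩ := mem_X_of_edge he
  exact Finset.card_pos.2 ⟨i, mem_xf.2 hi⟩

lemma key_ineq {a b c : ℕ} {e : Sym2 (Vt a b c)} (he : e ∈ (G1 a b c).edgeSet) :
    2 ≤ (xf e).card + ((if ∃ j : Fin (2*b), Sum.inr (Sum.inl j) ∈ e then 1 else 0)
      + (if ∃ k : Fin c, Sum.inr (Sum.inr k) ∈ e then 1 else 0)) := by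
  rcases edge_cases' he with ⟨i, j, hij, rfl⟩ | ⟨i, j, _, rfl⟩ | ⟨i, k, _, rfl⟩
  · rw [xf_XX, Finset.card_pair hij]; omega
  · rw [xf_XY]; simp [Sym2.mem_iff]
  · rw [xf_XZ]; simp [Sym2.mem_iff]

noncomputable def yen {a b c : ℕ} (e : Sym2 (Vt a b c)) : ℕ :=
  if h : ∃ j : Fin (2*b), Sum.inr (Sum.inl j) ∈ e then (h.choose : ℕ) else 0

lemma MY_card_le {a b c : ℕ} {M : Finset (Sym2 (Vt a b c))}
    (hM : IsMatching (G1 a b c) M) :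
    (M.filter (fun e => ∃ j : Fin (2*b), Sum.inr (Sum.inl j) ∈ e)).card ≤ 2*b := by
  have := Finset.card_le_card_of_injOn
    (f := yen)
    (s := M.filter (fun e => ∃ j : Fin (2*b), Sum.inr (Sum.inl j) ∈ e))
    (t := Finset.range (2*b)) ?_ ?_
  · simpa using this
  · intro e he
    rw [Finset.mem_coe, Finset.mem_filter] at he
    rw [yen, dif_pos he.2]
    exact Finset.mem_range.2 he.2.choose.isLt
  · intro e he f hf hfe
    rw [Finset.mem_coe, Finset.mem_filter] at he hf
    rw [yen, yen, dif_pos he.2, dif_pos hf.2] at hfe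
    by_contra hne
    have hj : he.2.choose = hf.2.choose := Fin.ext hfe
    exact hM.2 e he.1 f hf.1 hne _ he.2.choose_spec (hj ▸ hf.2.choose_spec)

lemma MZ_card_le {a b c : ℕ} {M : Finset (Sym2 (Vt a b c))}
    (hM : IsMatching (G1 a b c) M) (ha : 1 ≤ a) :
    (M.filter (fun e => ∃ k : Fin c, Sum.inr (Sum.inr k) ∈ e)).card ≤ 1 := by
  rw [Finset.card_le_one]
  intro e he f hf
  rw [Finset.mem_filter] at he hf
  obtain ⟨k, hk⟩ := he.2
  obtain ⟨k', hk'⟩ := hf.2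
  by_contra hne
  exact hM.2 e he.1 f hf.1 hne _ (Z_edge (hM.1 he.1) hk ha) (Z_edge (hM.1 hf.1) hk' ha)

lemma matching_card_le {a b c : ℕ} {M : Finset (Sym2 (Vt a b c))}
    (hM : IsMatching (G1 a b c) M) (ha : 1 ≤ a) (hba : b ≤ a) :
    M.card ≤ a + b := by
  have h1 : 2 * M.card ≤ (∑ e ∈ M, (xf e).card)
      + ((∑ e ∈ M, if ∃ j : Fin (2*b), Sum.inr (Sum.inl j) ∈ e then 1 else 0)
        + (∑ e ∈ M, if ∃ k : Fin c, Sum.inr (Sum.inr k) ∈ e then 1 else 0)) := by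
    calc 2 * M.card = ∑ _e ∈ M, 2 := by rw [Finset.sum_const, smul_eq_mul, mul_comm]
      _ ≤ ∑ e ∈ M, ((xf e).card + ((if ∃ j : Fin (2*b), Sum.inr (Sum.inl j) ∈ e then 1 else 0)
          + (if ∃ k : Fin c, Sum.inr (Sum.inr k) ∈ e then 1 else 0))) :=
        Finset.sum_le_sum (fun e he => key_ineq (hM.1 he))
      _ = _ := by rw [Finset.sum_add_distrib, Finset.sum_add_distrib]
  rw [Finset.sum_boole, Finset.sum_boole] at h1
  have h2 := sum_xf_le hM
  have h3 := MY_card_le hM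
  have h4 := MZ_card_le hM ha
  push_cast at h1
  omega
lemma induced_card_le {a b c : ℕ} {M : Finset (Sym2 (Vt a b c))}
    (hM : IsInducedMatching (G1 a b c) M) : M.card ≤ 1 := by
  by_contra h
  obtain ⟨e, he, f, hf, hne⟩ := Finset.one_lt_card.1 (show 1 < M.card by omega)
  obtain ⟨i, hi⟩ := mem_X_of_edge (hM.1.1 he)
  obtain ⟨j, hj⟩ := mem_X_of_edge (hM.1.1 hf)
  have hij : i ≠ j := by
    rintro rfl
    exact hM.1.2 e he f hf hne _ hi hj
  exact hM.2 e he f hf hne s(Sum.inl i, Sum.inl j) ((SimpleGraph.mem_edgeSet _).2 (adj_XX hij))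
    ⟨_, Sym2.mem_mk_left _ _, hi⟩ ⟨_, Sym2.mem_mk_right _ _, hj⟩

lemma singleton_induced {a b c : ℕ} (ha : 1 ≤ a) :
    IsInducedMatching (G1 a b c)
      {s(Sum.inl (⟨0, by omega⟩ : Fin (2*a)), Sum.inl ⟨1, by omega⟩)} := by
  refine ⟨⟨?_, ?_⟩, ?_⟩
  · intro e he
    rw [Finset.coe_singleton, Set.mem_singleton_iff] at he
    subst he
    exact adj_XX (by simp [Fin.ext_iff])
  · intro e he f hf hne
    rw [Finset.mem_singleton] at he hf
    exact absurd (he.trans hf.symm) hne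
  · intro e he f hf hne
    rw [Finset.mem_singleton] at he hf
    exact absurd (he.trans hf.symm) hne

lemma maximal_card_ge {a b c : ℕ} {M : Finset (Sym2 (Vt a b c))}
    (hM : IsMaximalMatching (G1 a b c) M) (ha : 1 ≤ a) : a ≤ M.card := by
  set C : Finset (Fin (2*a)) :=
    Finset.univ.filter (fun i => ∃ f ∈ M, Sum.inl i ∈ f) with hC
  have hCsub : C ⊆ M.biUnion xf := by
    intro i hi
    rw [hC, Finset.mem_filter] at hi
    obtain ⟨f, hf, hmem⟩ := hi.2
    simp only [Finset.mem_biUnion]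
    exact ⟨f, hf, mem_xf.2 hmem⟩
  have hCcard : C.card ≤ 2 * M.card := by
    calc C.card ≤ (M.biUnion xf).card := Finset.card_le_card hCsub
      _ ≤ ∑ e ∈ M, (xf e).card := Finset.card_biUnion_le
      _ ≤ ∑ _e ∈ M, 2 := Finset.sum_le_sum (fun e he => xf_card_le (hM.1.1 he))
      _ = 2 * M.card := by rw [Finset.sum_const, smul_eq_mul, mul_comm]
  have hClarge : 2*a - 1 ≤ C.card := by
    by_contra hsmall
    have h2 : 1 < (Finset.univ \ C).card := by
      have := Finset.card_le_univ C
      rw [Finset.card_sdiff_of_subset (Finset.subset_univ C)]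
      simp only [Finset.card_univ, Fintype.card_fin]
      omega
    obtain ⟨i, hi, j, hj, hij⟩ := Finset.one_lt_card.1 h2
    rw [Finset.mem_sdiff] at hi hj
    have hiC : ∀ f ∈ M, Sum.inl i ∉ f := by
      intro f hf hmem
      refine hi.2 ?_
      simp only [hC, Finset.mem_filter, Finset.mem_univ, true_and]
      exact ⟨f, hf, hmem⟩
    have hjC : ∀ f ∈ M, Sum.inl j ∉ f := by
      intro f hf hmem
      refine hj.2 ?_
      simp only [hC, Finset.mem_filter, Finset.mem_univ, true_and]
      exact ⟨f, hf, hmem⟩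
    set e : Sym2 (Vt a b c) := s(Sum.inl i, Sum.inl j) with hedef
    have heE : e ∈ (G1 a b c).edgeSet := adj_XX hij
    have heM : e ∉ M := fun h => hiC e h (by simp [hedef])
    refine hM.2 e heE heM ⟨?_, ?_⟩
    · intro f hf
      simp only [Finset.coe_insert, Set.mem_insert_iff] at hf
      rcases hf with rfl | hf
      · exact heE
      · exact hM.1.1 hf
    · intro e' he' f' hf' hne v hv hvf
      simp only [Finset.mem_insert] at he' hf'
      rcases he' with rfl | he' <;> rcases hf' with rfl | hf'
      · exact hne rfl
      · rcases Sym2.mem_iff.1 hv with rfl | rfl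
        · exact hiC f' hf' hvf
        · exact hjC f' hf' hvf
      · rcases Sym2.mem_iff.1 hvf with rfl | rfl
        · exact hiC e' he' hv
        · exact hjC e' he' hv
      · exact hM.1.2 e' he' f' hf' hne v hv hvf
  omega

def M0 (a b c : ℕ) : Finset (Sym2 (Vt a b c)) :=
  Finset.univ.image (fun k : Fin a =>
    s(Sum.inl (⟨2*(k:ℕ), by have := k.isLt; omega⟩ : Fin (2*a)),
      Sum.inl (⟨2*(k:ℕ)+1, by have := k.isLt; omega⟩ : Fin (2*a))))

lemma M0_card {a b c : ℕ} : (M0 a b c).card = a := by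
  rw [M0, Finset.card_image_of_injective _ ?_, Finset.card_univ, Fintype.card_fin]
  intro k k' h
  rw [Sym2.eq_iff] at h
  rcases h with ⟨h1, _⟩ | ⟨h1, _⟩ <;>
    · simp only [Sum.inl.injEq, Fin.mk.injEq] at h1
      exact Fin.ext (by omega)

lemma mem_M0_iff {a b c : ℕ} {e : Sym2 (Vt a b c)} :
    e ∈ M0 a b c ↔ ∃ k : Fin a,
      e = s(Sum.inl (⟨2*(k:ℕ), by have := k.isLt; omega⟩ : Fin (2*a)),
        Sum.inl (⟨2*(k:ℕ)+1, by have := k.isLt; omega⟩ : Fin (2*a))) := by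
  simp [M0, eq_comm]

lemma M0_matching {a b c : ℕ} : IsMatching (G1 a b c) (M0 a b c) := by
  constructor
  · intro e he
    rw [Finset.mem_coe, mem_M0_iff] at he
    obtain ⟨k, rfl⟩ := he
    exact adj_XX (by simp [Fin.ext_iff])
  · intro e he f hf hne v hv hvf
    rw [mem_M0_iff] at he hf
    obtain ⟨k, rfl⟩ := he
    obtain ⟨k', rfl⟩ := hf
    have hkk : (k:ℕ) ≠ (k':ℕ) := fun h => hne (by rw [Fin.ext_iff.2 h])
    rcases Sym2.mem_iff.1 hv with rfl | rfl <;>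
      · rcases Sym2.mem_iff.1 hvf with h | h <;>
          · simp only [Sum.inl.injEq, Fin.mk.injEq] at h
            omega

lemma M0_covers {a b c : ℕ} (i : Fin (2*a)) :
    ∃ m ∈ M0 a b c, Sum.inl i ∈ m := by
  have hia := i.isLt
  refine ⟨_, mem_M0_iff.2 ⟨⟨(i:ℕ)/2, by omega⟩, rfl⟩, ?_⟩
  rw [Sym2.mem_iff]
  by_cases h2 : (i:ℕ) % 2 = 0
  · left; exact congrArg Sum.inl (Fin.ext (by simp; omega))
  · right; exact congrArg Sum.inl (Fin.ext (by simp; omega))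

lemma M0_maximal {a b c : ℕ} : IsMaximalMatching (G1 a b c) (M0 a b c) := by
  refine ⟨M0_matching, ?_⟩
  intro e he hnm hins
  obtain ⟨i, hi⟩ := mem_X_of_edge he
  obtain ⟨m, hm, him⟩ := M0_covers (b := b) (c := c) i
  have hem : e ≠ m := fun h => hnm (h ▸ hm)
  refine hins.2 e ?_ m ?_ hem _ hi him
  · simp [Finset.mem_insert]
  · simp [Finset.mem_insert, hm]

def M1 (a b c : ℕ) (hba : b ≤ a) : Finset (Sym2 (Vt a b c)) :=
  (Finset.univ.image (fun j : Fin (2*b) =>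
    s(Sum.inl (⟨(j:ℕ), by have := j.isLt; omega⟩ : Fin (2*a)), Sum.inr (Sum.inl j)))) ∪
  (Finset.univ.image (fun k : Fin (a-b) =>
    s(Sum.inl (⟨2*b+2*(k:ℕ), by have := k.isLt; omega⟩ : Fin (2*a)),
      Sum.inl (⟨2*b+2*(k:ℕ)+1, by have := k.isLt; omega⟩ : Fin (2*a)))))

lemma mem_M1_iff {a b c : ℕ} {hba : b ≤ a} {e : Sym2 (Vt a b c)} :
    e ∈ M1 a b c hba ↔
      (∃ j : Fin (2*b),
        e = s(Sum.inl (⟨(j:ℕ), by have := j.isLt; omega⟩ : Fin (2*a)), Sum.inr (Sum.inl j))) ∨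
      (∃ k : Fin (a-b),
        e = s(Sum.inl (⟨2*b+2*(k:ℕ), by have := k.isLt; omega⟩ : Fin (2*a)),
          Sum.inl (⟨2*b+2*(k:ℕ)+1, by have := k.isLt; omega⟩ : Fin (2*a)))) := by
  simp [M1, eq_comm]

lemma M1_card {a b c : ℕ} (hba : b ≤ a) : (M1 a b c hba).card = a + b := by
  have h1 : Function.Injective (fun j : Fin (2*b) =>
      (s(Sum.inl (⟨(j:ℕ), by have := j.isLt; omega⟩ : Fin (2*a)), Sum.inr (Sum.inl j)) :
        Sym2 (Vt a b c))) := by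
    intro j j' h
    rw [Sym2.eq_iff] at h
    rcases h with ⟨h1, _⟩ | ⟨h1, h2⟩ <;> simp_all
  have h2 : Function.Injective (fun k : Fin (a-b) =>
      (s(Sum.inl (⟨2*b+2*(k:ℕ), by have := k.isLt; omega⟩ : Fin (2*a)),
        Sum.inl (⟨2*b+2*(k:ℕ)+1, by have := k.isLt; omega⟩ : Fin (2*a))) :
        Sym2 (Vt a b c))) := by
    intro k k' h
    rw [Sym2.eq_iff] at h
    rcases h with ⟨h1, _⟩ | ⟨h1, _⟩ <;>
      · simp only [Sum.inl.injEq, Fin.mk.injEq] at h1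
        exact Fin.ext (by omega)
  have hd : Disjoint
      (Finset.univ.image (fun j : Fin (2*b) =>
        (s(Sum.inl (⟨(j:ℕ), by have := j.isLt; omega⟩ : Fin (2*a)), Sum.inr (Sum.inl j)) :
          Sym2 (Vt a b c))))
      (Finset.univ.image (fun k : Fin (a-b) =>
        (s(Sum.inl (⟨2*b+2*(k:ℕ), by have := k.isLt; omega⟩ : Fin (2*a)),
          Sum.inl (⟨2*b+2*(k:ℕ)+1, by have := k.isLt; omega⟩ : Fin (2*a))) :
          Sym2 (Vt a b c)))) := by
    rw [Finset.disjoint_left]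
    intro e he hf
    simp only [Finset.mem_image, Finset.mem_univ, true_and] at he hf
    obtain ⟨j, rfl⟩ := he
    obtain ⟨k, hk⟩ := hf
    rw [Sym2.eq_iff] at hk
    rcases hk with ⟨hk1, hk2⟩ | ⟨hk1, hk2⟩ <;> simp at hk1 hk2
  rw [M1, Finset.card_union_of_disjoint hd, Finset.card_image_of_injective _ h1,
    Finset.card_image_of_injective _ h2, Finset.card_univ, Finset.card_univ,
    Fintype.card_fin, Fintype.card_fin]
  omega

lemma M1_matching {a b c : ℕ} (hba : b ≤ a) : IsMatching (G1 a b c) (M1 a b c hba) := by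
  constructor
  · intro e he
    rw [Finset.mem_coe, mem_M1_iff] at he
    rcases he with ⟨j, rfl⟩ | ⟨k, rfl⟩
    · exact adj_XY rfl
    · exact adj_XX (by simp [Fin.ext_iff])
  · intro e he f hf hne v hv hvf
    rw [mem_M1_iff] at he hf
    rcases he with ⟨j, rfl⟩ | ⟨k, rfl⟩ <;> rcases hf with ⟨j', rfl⟩ | ⟨k', rfl⟩
    · have hjj : (j:ℕ) ≠ (j':ℕ) := fun h => hne (by rw [Fin.ext h])
      rcases Sym2.mem_iff.1 hv with rfl | rfl <;>
        rcases Sym2.mem_iff.1 hvf with h | h <;>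
          simp [Fin.ext_iff] at h <;> omega
    · have hj := j.isLt
      rcases Sym2.mem_iff.1 hv with rfl | rfl <;>
        rcases Sym2.mem_iff.1 hvf with h | h <;>
          simp [Fin.ext_iff] at h <;> omega
    · have hj := j'.isLt
      rcases Sym2.mem_iff.1 hv with rfl | rfl <;>
        rcases Sym2.mem_iff.1 hvf with h | h <;>
          simp [Fin.ext_iff] at h <;> omega
    · have hkk : (k:ℕ) ≠ (k':ℕ) := fun h => hne (by rw [Fin.ext h])
      rcases Sym2.mem_iff.1 hv with rfl | rfl <;>
        rcases Sym2.mem_iff.1 hvf with h | h <;>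
          simp [Fin.ext_iff] at h <;> omega

theorem G1_invariants (a b c : ℕ) (ha : 1 ≤ a) (hba : b ≤ a) :
    Fintype.card (Fin (2 * a) ⊕ Fin (2 * b) ⊕ Fin c) = 2 * a + 2 * b + c ∧
      indMatchNum (G1 a b c) = 1 ∧
      minMatchNum (G1 a b c) = a ∧
      matchNum (G1 a b c) = a + b := by
  refine ⟨?_, ?_, ?_, ?_⟩
  · rw [Fintype.card_sum, Fintype.card_sum, Fintype.card_fin, Fintype.card_fin,
      Fintype.card_fin]
    omega
  · have hmem : (1 : ℕ) ∈ {n : ℕ | ∃ M : Finset (Sym2 (Vt a b c)),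
        IsInducedMatching (G1 a b c) M ∧ M.card = n} :=
      ⟨_, singleton_induced ha, Finset.card_singleton _⟩
    have hub : ∀ n ∈ {n : ℕ | ∃ M : Finset (Sym2 (Vt a b c)),
        IsInducedMatching (G1 a b c) M ∧ M.card = n}, n ≤ 1 := by
      rintro n ⟨M, hM, rfl⟩
      exact induced_card_le hM
    exact le_antisymm (csSup_le ⟨1, hmem⟩ hub) (le_csSup ⟨1, hub⟩ hmem)
  · have hmem : a ∈ {n : ℕ | ∃ M : Finset (Sym2 (Vt a b c)),
        IsMaximalMatching (G1 a b c) M ∧ M.card = n} :=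
      ⟨M0 a b c, M0_maximal, M0_card⟩
    refine le_antisymm (Nat.sInf_le hmem) (le_csInf ⟨a, hmem⟩ ?_)
    rintro n ⟨M, hM, rfl⟩
    exact maximal_card_ge hM ha
  · have hmem : a + b ∈ {n : ℕ | ∃ M : Finset (Sym2 (Vt a b c)),
        IsMatching (G1 a b c) M ∧ M.card = n} :=
      ⟨M1 a b c hba, M1_matching hba, M1_card hba⟩
    have hub : ∀ n ∈ {n : ℕ | ∃ M : Finset (Sym2 (Vt a b c)),
        IsMatching (G1 a b c) M ∧ M.card = n}, n ≤ a + b := by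
      rintro n ⟨M, hM, rfl⟩
      exact matching_card_le hM ha hba
    exact le_antisymm (csSup_le ⟨_, hmem⟩ hub) (le_csSup ⟨a + b, hub⟩ hmem)

end MatchingPaper
end
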